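/- arXiv:2211.03133 — 6 statements merged into one kernel-verified Lean document; each statement's English description precedes it below -/
import Mathlib

section
/- For all integers n and s with n ≥ s ≥ 2, the minimum number of edges in a K_s-saturated graph on n vertices equals (s−2)(n−s+2) + C(s−2, 2). -/
/-- `sGraph n k` is the join `S_{n,k}` of the complete graph `K_k` with the empty graph on
`n - k` vertices: the first `k` vertices of `Fin n` form a clique joined to the rest. -/
def sGraph (n k : ℕ) : SimpleGraph (Fin n) where
  Adj i j := i ≠ j ∧ ((i : ℕ) < k ∨ (j : ℕ) < k)
  symm := ⟨fun i j h => ⟨h.1.symm, h.2.symm⟩⟩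
  loopless := ⟨fun i h => h.1 rfl⟩

/-- `G` is `K_s`-saturated: `G` has no `K_s` subgraph, but adding any edge between two
distinct nonadjacent vertices creates one. -/
def IsKSat {V : Type*} (G : SimpleGraph V) (s : ℕ) : Prop :=
  G.CliqueFree s ∧
    ∀ u v : V, u ≠ v → ¬ G.Adj u v →
      ¬ (G ⊔ SimpleGraph.fromEdgeSet {s(u, v)}).CliqueFree s

/-- `numMatchings G k` is the number of copies of `M_k` in `G`, i.e. the number of
`k`-element sets of pairwise disjoint edges of `G`. -/
noncomputable def numMatchings {V : Type*} (G : SimpleGraph V) (k : ℕ) : ℕ :=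
  Set.ncard {M : Finset (Sym2 V) | M.card = k ∧ (∀ e ∈ M, e ∈ G.edgeSet) ∧
    ∀ e ∈ M, ∀ f ∈ M, e ≠ f → ∀ v, v ∈ e → v ∉ f}

/-- `satM n k s` is the minimum number of copies of `M_k` over all `K_s`-saturated graphs
on `n` vertices. -/
noncomputable def satM (n k s : ℕ) : ℕ :=
  sInf {m | ∃ G : SimpleGraph (Fin n), IsKSat G s ∧ numMatchings G k = m}

/-- `numIndepSets G ℓ` is the number of independent sets of size `ℓ` in `G`. -/
noncomputable def numIndepSets {V : Type*} (G : SimpleGraph V) (ℓ : ℕ) : ℕ :=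
  Set.ncard {t : Finset V | t.card = ℓ ∧ ∀ v ∈ t, ∀ w ∈ t, ¬ G.Adj v w}

/-- `numCliques G r` is the number of copies of `K_r` in `G`, i.e. the number of
`r`-element vertex subsets inducing a complete graph. -/
noncomputable def numCliques {V : Type*} (G : SimpleGraph V) (r : ℕ) : ℕ :=
  Set.ncard {t : Finset V | t.card = r ∧ G.IsClique (t : Set V)}


namespace EHM
open Finset

noncomputable section

/-- lifted moment curve -/
def mq (d t : ℕ) : Fin (d+1) → ℝ := fun m => (t:ℝ)^(m:ℕ)
/-- moment curve -/
def mp (d t : ℕ) : Fin d → ℝ := fun m => (t:ℝ)^((m:ℕ)+1)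

lemma mq_zero (d t : ℕ) : mq d t 0 = 1 := by simp [mq]

lemma mq_succ (d t : ℕ) (m : Fin d) : mq d t m.succ = mp d t m := by
  simp [mq, mp, Fin.val_succ]

lemma vdm_indep {d : ℕ} (T : Finset ℕ) (hT : T.card = d+1) (c : ℕ → ℝ)
    (h : ∑ t ∈ T, c t • mq d t = 0) : ∀ t ∈ T, c t = 0 := by
  set σ := T.orderIsoOfFin hT with hσ
  set v : Fin (d+1) → ℝ := fun a => ((σ a : ℕ) : ℝ) with hv
  have hdet : (Matrix.vandermonde v).det ≠ 0 := by
    rw [Matrix.det_vandermonde]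
    apply Finset.prod_ne_zero_iff.2
    intro i _
    apply Finset.prod_ne_zero_iff.2
    intro j hj
    have h1 : ((σ i : ℕ) : ℝ) < ((σ j : ℕ) : ℝ) := by
      have := σ.strictMono (Finset.mem_Ioi.1 hj)
      exact_mod_cast this
    have h2 : v i < v j := h1
    linarith
  have hli : LinearIndependent ℝ (fun a : Fin (d+1) => mq d (σ a : ℕ)) := by
    have := Matrix.linearIndependent_rows_iff_isUnit.2
      ((Matrix.isUnit_iff_isUnit_det _).2 (isUnit_iff_ne_zero.2 hdet))
    exact this
  have hsum : ∑ a : Fin (d+1), c (σ a : ℕ) • mq d (σ a : ℕ) = 0 := by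
    rw [← h]
    rw [← Finset.sum_coe_sort T (fun t => c t • mq d t)]
    exact (Equiv.sum_comp σ.toEquiv (fun t : T => c (t : ℕ) • mq d (t : ℕ)))
  intro t ht
  have := Fintype.linearIndependent_iff.1 hli (fun a => c (σ a : ℕ)) hsum
  have h2 := this (σ.symm ⟨t, ht⟩)
  simpa using h2

lemma keyIndep {d : ℕ} (T : Finset ℕ) (hT : T.card ≤ d+1) (i : ℕ) (hi : i ∈ T) (c : ℕ → ℝ)
    (h : ∑ j ∈ T.erase i, c j • (mp d i - mp d j) = 0) : ∀ j ∈ T.erase i, c j = 0 := by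
  obtain ⟨T', hTT', hT'⟩ := Infinite.exists_superset_card_eq T (d+1) hT
  set c' : ℕ → ℝ := fun j => if j ∈ T.erase i then c j else 0 with hc'
  have hi' : i ∈ T' := hTT' hi
  have hsub : T.erase i ⊆ T'.erase i := Finset.erase_subset_erase i hTT'
  have h1 : ∑ j ∈ T'.erase i, c' j • (mp d i - mp d j) = 0 := by
    rw [← Finset.sum_subset hsub]
    · rw [← h]
      apply Finset.sum_congr rfl
      intro j hj
      rw [hc']; simp [hj]
    · intro j _ hj
      rw [hc']; simp [hj]
  set C : ℕ → ℝ := fun t => if t = i then ∑ j ∈ T'.erase i, c' j else -c' t with hC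
  have claim : ∑ t ∈ T', C t • mq d t = 0 := by
    rw [← Finset.add_sum_erase T' (fun t => C t • mq d t) hi']
    have e1 : C i = ∑ j ∈ T'.erase i, c' j := by rw [hC]; simp
    have e2 : ∀ j ∈ T'.erase i, C j • mq d j = -(c' j • mq d j) := by
      intro j hj
      have : j ≠ i := Finset.ne_of_mem_erase hj
      rw [hC]; simp [this]
    rw [e1, Finset.sum_congr rfl e2, Finset.sum_neg_distrib]
    rw [Finset.sum_smul]
    rw [← sub_eq_add_neg, ← Finset.sum_sub_distrib]
    have e3 : ∀ j ∈ T'.erase i, c' j • mq d i - c' j • mq d j = c' j • (mq d i - mq d j) := by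
      intro j _; rw [smul_sub]
    rw [Finset.sum_congr rfl e3]
    funext m
    rw [Finset.sum_apply]
    induction m using Fin.cases with
    | zero =>
      simp only [Pi.smul_apply, Pi.sub_apply, mq_zero, sub_self, smul_zero,
        Finset.sum_const_zero, Pi.zero_apply]
    | succ m' =>
      have h2 := congrFun h1 m'
      rw [Finset.sum_apply] at h2
      simp only [Pi.smul_apply, Pi.sub_apply, Pi.zero_apply, mq_succ] at h2 ⊢
      exact h2
  have hall := vdm_indep T' hT' C claim
  intro j hj
  have hj' : j ∈ T'.erase i := hsub hj
  have hCj := hall j (Finset.mem_of_mem_erase hj')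
  have hne : j ≠ i := Finset.ne_of_mem_erase hj
  rw [hC] at hCj
  simp only [if_neg hne] at hCj
  have : c' j = 0 := by linarith [neg_eq_zero.1 hCj]
  rw [hc'] at this
  simpa [hj] using this
/-- rigidity row of edge (i,j) -/
def rv (n d : ℕ) (i j : Fin n) : Fin n × Fin d → ℝ :=
  fun km => ((if km.1 = i then (1:ℝ) else 0) - (if km.1 = j then 1 else 0))
    * (mp d i km.2 - mp d j km.2)

lemma rv_symm (n d : ℕ) (i j : Fin n) : rv n d i j = rv n d j i := by
  funext km; unfold rv; ring

lemma rv_self (n d : ℕ) (i : Fin n) : rv n d i i = 0 := by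
  funext km; unfold rv; simp

/-- double-sum vanishing -/
lemma sum2zero {α : Type*} (S : Finset α) (c q ind : α → ℝ)
    (h0 : ∑ a ∈ S, c a = 0) (h1 : ∑ a ∈ S, c a * q a = 0) :
    ∑ a ∈ S, ∑ b ∈ S, (c a * c b) * ((ind a - ind b) * (q a - q b)) = 0 := by
  have expand : ∑ a ∈ S, ∑ b ∈ S, (c a * c b) * ((ind a - ind b) * (q a - q b)) =
      (∑ a ∈ S, c a * ind a * q a) * (∑ b ∈ S, c b)
      - (∑ a ∈ S, c a * ind a) * (∑ b ∈ S, c b * q b)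
      - (∑ a ∈ S, c a * q a) * (∑ b ∈ S, c b * ind b)
      + (∑ a ∈ S, c a) * (∑ b ∈ S, c b * (ind b * q b)) := by
    rw [Finset.sum_mul_sum, Finset.sum_mul_sum, Finset.sum_mul_sum, Finset.sum_mul_sum]
    rw [← Finset.sum_sub_distrib, ← Finset.sum_sub_distrib, ← Finset.sum_add_distrib]
    apply Finset.sum_congr rfl; intro a _
    rw [← Finset.sum_sub_distrib, ← Finset.sum_sub_distrib, ← Finset.sum_add_distrib]
    apply Finset.sum_congr rfl; intro b _
    ring
  rw [expand, h0, h1]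
  ring

/-- the self-stress lemma: the row of (u,v) is spanned by the other rows within a
(d+2)-set -/
lemma stress {n d : ℕ} (S : Finset (Fin n)) (hcard : S.card = d+2)
    (u v : Fin n) (hu : u ∈ S) (hv : v ∈ S) (huv : u ≠ v) :
    rv n d u v ∈ Submodule.span ℝ
      {x | ∃ a b : Fin n, a ∈ S ∧ b ∈ S ∧ a ≠ b ∧ s(a,b) ≠ s(u,v) ∧ x = rv n d a b} := by
  classical
  -- the set of values
  set TN : Finset ℕ := S.image (fun t : Fin n => (t : ℕ)) with hTN
  have hvalinj : Function.Injective (fun t : Fin n => (t : ℕ)) := Fin.val_injective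
  have hTNcard : TN.card = d + 2 := by
    rw [hTN, Finset.card_image_of_injective _ hvalinj, hcard]
  -- a linear dependency with all coefficients nonzero
  have hnli : ¬ LinearIndependent ℝ (fun t : ↥TN => mq d (t : ℕ)) := by
    intro hli
    have h1 := hli.fintype_card_le_finrank
    rw [Fintype.card_coe, hTNcard] at h1
    have h2 : Module.finrank ℝ (Fin (d+1) → ℝ) = d + 1 := by
      simp [Module.finrank_pi]
    omega
  obtain ⟨g, hgsum, t₀, hg0⟩ := Fintype.not_linearIndependent_iff.1 hnli
  set c : ℕ → ℝ := fun x => if h : x ∈ TN then g ⟨x, h⟩ else 0 with hc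
  have hcsum : ∑ x ∈ TN, c x • mq d x = 0 := by
    rw [← hgsum, ← Finset.sum_coe_sort TN (fun x => c x • mq d x)]
    apply Finset.sum_congr rfl
    intro x _
    rw [hc]; simp
  have hcne : ∀ x ∈ TN, c x ≠ 0 := by
    intro x₀ hx₀ hzero
    have herase : ∑ x ∈ TN.erase x₀, c x • mq d x = 0 := by
      rw [← Finset.add_sum_erase TN _ hx₀] at hcsum
      rw [hzero, zero_smul, zero_add] at hcsum
      exact hcsum
    have hcardE : (TN.erase x₀).card = d + 1 := by
      rw [Finset.card_erase_of_mem hx₀, hTNcard]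
      omega
    have hall := vdm_indep _ hcardE c herase
    apply hg0
    have ht₀ : (t₀ : ℕ) ∈ TN := t₀.2
    have : c (t₀ : ℕ) = 0 := by
      by_cases hsame : (t₀ : ℕ) = x₀
      · rw [hsame]; exact hzero
      · exact hall _ (Finset.mem_erase.2 ⟨hsame, ht₀⟩)
    rw [hc] at this
    simpa using this
  have hc0 : ∑ x ∈ TN, c x = 0 := by
    have := congrFun hcsum 0
    rw [Finset.sum_apply] at this
    simpa [mq] using this
  have hc1 : ∀ m : Fin d, ∑ x ∈ TN, c x * ((x:ℝ)^((m:ℕ)+1)) = 0 := by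
    intro m
    have := congrFun hcsum m.succ
    rw [Finset.sum_apply] at this
    simpa [mq, Fin.val_succ] using this
  -- transfer to Fin n indexed sums
  set cc : Fin n → ℝ := fun t => c (t : ℕ) with hcc
  have hcc0 : ∑ t ∈ S, cc t = 0 := by
    rw [← hc0, hTN, Finset.sum_image (fun a _ b _ h => hvalinj h)]
  have hcc1 : ∀ m : Fin d, ∑ t ∈ S, cc t * mp d (t:ℕ) m = 0 := by
    intro m
    rw [← hc1 m, hTN, Finset.sum_image (fun a _ b _ h => hvalinj h)]
    rfl
  have hccne : ∀ t ∈ S, cc t ≠ 0 := fun t ht =>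
    hcne _ (Finset.mem_image_of_mem _ ht)
  -- the double sum vanishes
  have TT : ∑ a ∈ S, ∑ b ∈ S, (cc a * cc b) • rv n d a b = 0 := by
    funext km
    rw [Finset.sum_apply]
    have : ∀ a ∈ S, (∑ b ∈ S, (cc a * cc b) • rv n d a b) km
        = ∑ b ∈ S, (cc a * cc b) * rv n d a b km := by
      intro a _
      rw [Finset.sum_apply]
      apply Finset.sum_congr rfl
      intro b _; rfl
    rw [Finset.sum_congr rfl this]
    have := sum2zero S cc (fun t => mp d (t:ℕ) km.2)
      (fun t => if km.1 = t then (1:ℝ) else 0) hcc0 (hcc1 km.2)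
    simpa [rv] using this
  -- peel off the (u,v) and (v,u) terms
  set D := S ×ˢ S with hD
  have TT' : ∑ e ∈ D, (cc e.1 * cc e.2) • rv n d e.1 e.2 = 0 := by
    rw [hD, Finset.sum_product]; exact TT
  have huvD : (u, v) ∈ D := Finset.mem_product.2 ⟨hu, hv⟩
  have hvuD : (v, u) ∈ D.erase (u, v) := by
    refine Finset.mem_erase.2 ⟨?_, Finset.mem_product.2 ⟨hv, hu⟩⟩
    intro h
    exact huv ((congrArg Prod.fst h)).symm
  have step1 : ((cc u * cc v) • rv n d u v + (cc v * cc u) • rv n d v u) +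
      ∑ e ∈ (D.erase (u,v)).erase (v,u), (cc e.1 * cc e.2) • rv n d e.1 e.2 = 0 := by
    rw [add_assoc, Finset.add_sum_erase _ (fun e => (cc e.1 * cc e.2) • rv n d e.1 e.2) hvuD,
      Finset.add_sum_erase _ (fun e => (cc e.1 * cc e.2) • rv n d e.1 e.2) huvD]
    exact TT'
  have hA : (cc u * cc v) • rv n d u v + (cc v * cc u) • rv n d v u
      = (2 * (cc u * cc v)) • rv n d u v := by
    rw [rv_symm n d v u, ← add_smul]
    congr 1
    ring
  rw [hA] at step1
  have hrest : ∑ e ∈ (D.erase (u,v)).erase (v,u), (cc e.1 * cc e.2) • rv n d e.1 e.2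
      = -((2 * (cc u * cc v)) • rv n d u v) :=
    eq_neg_of_add_eq_zero_right step1
  have hmem : ∑ e ∈ (D.erase (u,v)).erase (v,u), (cc e.1 * cc e.2) • rv n d e.1 e.2
      ∈ Submodule.span ℝ
        {x | ∃ a b : Fin n, a ∈ S ∧ b ∈ S ∧ a ≠ b ∧ s(a,b) ≠ s(u,v) ∧ x = rv n d a b} := by
    apply Submodule.sum_mem
    intro e he
    have he1 : e ≠ (v, u) := (Finset.mem_erase.1 he).1
    have he2 : e ≠ (u, v) := (Finset.mem_erase.1 (Finset.mem_of_mem_erase he)).1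
    have heD : e ∈ D := Finset.mem_of_mem_erase (Finset.mem_of_mem_erase he)
    have heS := Finset.mem_product.1 heD
    by_cases hdiag : e.1 = e.2
    · rw [hdiag, rv_self, smul_zero]
      exact Submodule.zero_mem _
    · apply Submodule.smul_mem
      apply Submodule.subset_span
      refine ⟨e.1, e.2, heS.1, heS.2, hdiag, ?_, rfl⟩
      intro heq
      rw [Sym2.eq_iff] at heq
      rcases heq with ⟨h1, h2⟩ | ⟨h1, h2⟩
      · exact he2 (Prod.ext h1 h2)
      · exact he1 (Prod.ext h1 h2)
  rw [hrest] at hmem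
  have hmem2 := (Submodule.neg_mem_iff _).1 hmem
  have hne2 : (2 : ℝ) * (cc u * cc v) ≠ 0 := by
    have h1 := hccne u hu
    have h2 := hccne v hv
    positivity
  have := Submodule.smul_mem _ ((2 * (cc u * cc v))⁻¹) hmem2
  rwa [inv_smul_smul₀ hne2] at this


lemma card_val_lt {n : ℕ} (m : ℕ) (hm : m ≤ n) :
    ((univ : Finset (Fin n)).filter (fun x : Fin n => (x:ℕ) < m)).card = m := by
  have : (univ : Finset (Fin n)).filter (fun x : Fin n => (x:ℕ) < m)
      = (univ : Finset (Fin m)).map ⟨Fin.castLE hm, Fin.castLE_injective hm⟩ := by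
    ext x
    simp only [Finset.mem_filter, Finset.mem_univ, true_and, Finset.mem_map,
      Function.Embedding.coeFn_mk]
    constructor
    · intro hx
      exact ⟨⟨(x:ℕ), hx⟩, by ext; simp [Fin.castLE]⟩
    · rintro ⟨y, rfl⟩
      exact y.2
  rw [this, Finset.card_map, Finset.card_univ, Fintype.card_fin]

lemma card_val_gt {n : ℕ} (m : ℕ) (hm : m ≤ n) :
    ((univ : Finset (Fin n)).filter (fun x : Fin n => m < (x:ℕ))).card = n - (m+1) := by
  by_cases hm1 : m + 1 ≤ n
  · have h1 := Finset.card_filter_add_card_filter_not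
      (s := (univ : Finset (Fin n))) (p := fun x => (x:ℕ) < m+1)
    have h2 : ((univ : Finset (Fin n)).filter (fun x : Fin n => ¬ (x:ℕ) < m+1))
        = (univ : Finset (Fin n)).filter (fun x : Fin n => m < (x:ℕ)) := by
      apply Finset.filter_congr; intro x _; simp
    rw [card_val_lt (m+1) hm1, h2, Finset.card_univ, Fintype.card_fin] at h1
    omega
  · have : ((univ : Finset (Fin n)).filter (fun x : Fin n => m < (x:ℕ))) = ∅ := by
      apply Finset.filter_false_of_mem
      intro x _
      have := x.2; omega
    rw [this]; simp; omega

lemma two_choose (m : ℕ) : 2 * m.choose 2 = m * (m - 1) := by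
  cases m with
  | zero => rfl
  | succ k =>
    rw [Nat.choose_two_right]
    simp only [Nat.add_sub_cancel]
    have heven : 2 ∣ (k+1) * k := by
      rcases Nat.even_or_odd k with he | ho
      · exact Dvd.dvd.mul_left he.two_dvd _
      · exact Dvd.dvd.mul_right (Even.two_dvd (Odd.add_one ho)) _
    rw [Nat.mul_div_cancel' heven]

/-- number of strictly increasing pairs in `Fin m × Fin m` -/
lemma card_tri (m : ℕ) :
    ((univ : Finset (Fin m × Fin m)).filter (fun e => e.1 < e.2)).card = m.choose 2 := by
  set A := (univ : Finset (Fin m × Fin m)).filter (fun e => e.1 < e.2) with hA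
  set B := (univ : Finset (Fin m × Fin m)).filter (fun e => e.2 < e.1) with hB
  have hAB : A.card = B.card := by
    apply Finset.card_bij (fun e _ => (e.2, e.1))
    · intro e he
      simp only [hA, hB, Finset.mem_filter, Finset.mem_univ, true_and] at he ⊢
      exact he
    · intro e₁ h₁ e₂ h₂ h
      have := congrArg Prod.fst h
      have := congrArg Prod.snd h
      ext <;> simp_all
    · intro e he
      simp only [hA, hB, Finset.mem_filter, Finset.mem_univ, true_and] at he ⊢
      exact ⟨(e.2, e.1), he, rfl⟩
  have h1 := Finset.card_filter_add_card_filter_not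
    (s := (univ : Finset (Fin m × Fin m))) (p := fun e => e.1 < e.2)
  have h3 := Finset.card_filter_add_card_filter_not
    (s := (univ : Finset (Fin m × Fin m)).filter (fun e => ¬ e.1 < e.2))
    (p := fun e => e.2 < e.1)
  have h4 : ((univ : Finset (Fin m × Fin m)).filter (fun e => ¬ e.1 < e.2)).filter
      (fun e => e.2 < e.1) = B := by
    rw [Finset.filter_filter, hB]
    apply Finset.filter_congr; intro e _
    simp; omega
  have h5 : ((univ : Finset (Fin m × Fin m)).filter (fun e => ¬ e.1 < e.2)).filter
      (fun e => ¬ e.2 < e.1) = (univ : Finset (Fin m)).image (fun i => (i, i)) := by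
    rw [Finset.filter_filter]
    ext e
    simp only [Finset.mem_filter, Finset.mem_univ, true_and, Finset.mem_image]
    constructor
    · rintro ⟨hno1, hno2⟩
      have : e.1 = e.2 := le_antisymm (not_lt.1 hno2) (not_lt.1 hno1)
      exact ⟨e.1, by rw [Prod.ext_iff]; exact ⟨rfl, this⟩⟩
    · rintro ⟨i, rfl⟩
      simp
  have h6 : ((univ : Finset (Fin m)).image (fun i => (i, i))).card = m := by
    rw [Finset.card_image_of_injective _ (fun a b h => (congrArg Prod.fst h)),
      Finset.card_univ, Fintype.card_fin]
  rw [h4, h5, h6] at h3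
  rw [Finset.card_univ, Fintype.card_prod, Fintype.card_fin] at h1
  have h7 := two_choose m
  have hmm : m * m = m * (m-1) + m := by
    cases m with
    | zero => simp
    | succ k => simp only [Nat.add_sub_cancel]; ring
  rw [hmm, ← h7] at h1
  have hconv : ((univ : Finset (Fin m × Fin m)).filter (fun e => ¬ e.1 < e.2)).card
      = B.card + m := by
    rw [← h3]
  rw [hconv, ← hAB, ← hA] at h1
  omega
/-- the independent edge family: a clique on `{0, …, d}` plus edges from `{0, …, d-1}`
to everything above `d` -/
def IFset (n d : ℕ) (h : d + 1 ≤ n) : Finset (Fin n × Fin n) :=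
  (((univ : Finset (Fin (d+1) × Fin (d+1))).filter (fun e => e.1 < e.2)).image
      (Prod.map (Fin.castLE h) (Fin.castLE h)))
    ∪ ((univ.filter (fun x : Fin n => (x:ℕ) < d)) ×ˢ (univ.filter (fun x : Fin n => d < (x:ℕ))))

lemma mem_IFset {n d : ℕ} {h : d + 1 ≤ n} {e : Fin n × Fin n} :
    e ∈ IFset n d h ↔
      ((e.1:ℕ) < (e.2:ℕ) ∧ (e.2:ℕ) ≤ d) ∨ ((e.1:ℕ) < d ∧ d < (e.2:ℕ)) := by
  unfold IFset
  simp only [Finset.mem_union, Finset.mem_image, Finset.mem_filter, Finset.mem_univ, true_and,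
    Finset.mem_product]
  constructor
  · rintro (⟨⟨a, b⟩, hab, heq⟩ | ⟨h1, h2⟩)
    · left
      have h1 : e.1 = Fin.castLE h a := (congrArg Prod.fst heq).symm
      have h2 : e.2 = Fin.castLE h b := (congrArg Prod.snd heq).symm
      rw [h1, h2]
      simp only [Fin.coe_castLE]
      exact ⟨hab, Nat.lt_succ_iff.1 b.2⟩
    · right; exact ⟨h1, h2⟩
  · rintro (⟨h1, h2⟩ | h12)
    · left
      refine ⟨(⟨(e.1:ℕ), by omega⟩, ⟨(e.2:ℕ), by omega⟩), h1, ?_⟩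
      ext <;> simp [Prod.map, Fin.castLE]
    · right; exact h12

lemma card_IFset {n d : ℕ} (h : d + 1 ≤ n) :
    (IFset n d h).card = (d+1).choose 2 + d * (n - (d+1)) := by
  unfold IFset
  rw [Finset.card_union_of_disjoint]
  · rw [Finset.card_image_of_injective _
      (Prod.map_injective.2 ⟨Fin.castLE_injective h, Fin.castLE_injective h⟩),
      card_tri, Finset.card_product, card_val_lt d (by omega), card_val_gt d (by omega)]
  · rw [Finset.disjoint_left]
    intro e he1 he2
    obtain ⟨⟨a, b⟩, _, heq⟩ := Finset.mem_image.1 he1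
    have h2 : e.2 = Fin.castLE h b := (congrArg Prod.snd heq).symm
    have hb : (e.2:ℕ) ≤ d := by rw [h2]; simpa [Fin.coe_castLE] using Nat.lt_succ_iff.1 b.2
    have := (Finset.mem_product.1 he2).2
    simp only [Finset.mem_filter, Finset.mem_univ, true_and] at this
    omega

section indep
variable {n d : ℕ} {h : d + 1 ≤ n}

/-- coordinate reduction: the block of the vanishing sum at a vertex `k` -/
lemma coordRed (G2 : Fin n × Fin n → ℝ)
    (hsum : ∑ e ∈ IFset n d h, G2 e • rv n d e.1 e.2 = 0)
    (k : Fin n) (W : Finset (Fin n))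
    (hW : ∀ x ∈ W, x ≠ k)
    (himg : (IFset n d h).filter (fun x => x.2 = k) = W.image (fun a => (a, k)))
    (hzero : ∀ x ∈ IFset n d h, x.2 ≠ k → x.1 = k → G2 x = 0) :
    ∀ m : Fin d, ∑ a ∈ W, G2 (a, k) * (mp d (k:ℕ) m - mp d (a:ℕ) m) = 0 := by
  intro m
  have h0 := congrFun hsum (k, m)
  rw [Finset.sum_apply] at h0
  simp only [Pi.zero_apply] at h0
  have hred : ∑ x ∈ (IFset n d h).filter (fun x => x.2 = k), (G2 x • rv n d x.1 x.2) (k, m)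
      = ∑ x ∈ IFset n d h, (G2 x • rv n d x.1 x.2) (k, m) := by
    apply Finset.sum_filter_of_ne
    intro x hx hne
    by_contra hxk
    apply hne
    by_cases hx1 : x.1 = k
    · rw [hzero x hx hxk hx1, zero_smul]; rfl
    · show (G2 x • rv n d x.1 x.2) (k, m) = 0
      have : rv n d x.1 x.2 (k, m) = 0 := by
        unfold rv
        rw [if_neg (fun hh => hx1 hh.symm), if_neg (fun hh => hxk hh.symm)]
        ring
      rw [Pi.smul_apply, this, smul_zero]
  rw [← hred, himg, Finset.sum_image (fun a _ b _ hab => (congrArg Prod.fst hab))] at h0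
  rw [← h0]
  apply Finset.sum_congr rfl
  intro a ha
  have hak : k ≠ a := fun hh => (hW a ha) hh.symm
  rw [Pi.smul_apply]
  unfold rv
  rw [if_neg hak, if_pos rfl]
  show G2 (a, k) * (mp d (k:ℕ) m - mp d (a:ℕ) m)
    = G2 (a, k) • ((0 - 1) * (mp d (a:ℕ) m - mp d (k:ℕ) m))
  rw [smul_eq_mul]; ring

/-- conclude coefficients vanish via `keyIndep` -/
lemma applyKey (G2 : Fin n × Fin n → ℝ) (k : Fin n) (W : Finset (Fin n))
    (hWlt : ∀ x ∈ W, (x:ℕ) < (k:ℕ)) (hWcard : W.card ≤ d)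
    (hcoord : ∀ m : Fin d, ∑ a ∈ W, G2 (a, k) * (mp d (k:ℕ) m - mp d (a:ℕ) m) = 0) :
    ∀ a ∈ W, G2 (a, k) = 0 := by
  classical
  set T : Finset ℕ := insert (k:ℕ) (W.image (fun x : Fin n => (x:ℕ))) with hT
  have hknotmem : (k:ℕ) ∉ W.image (fun x : Fin n => (x:ℕ)) := by
    intro hmem
    obtain ⟨x, hx, hxk⟩ := Finset.mem_image.1 hmem
    exact absurd hxk (Nat.ne_of_lt (hWlt x hx))
  have hcardT : T.card ≤ d + 1 := by
    rw [hT, Finset.card_insert_of_notMem hknotmem]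
    have := Finset.card_image_le (s := W) (f := fun x : Fin n => (x:ℕ))
    omega
  have herase : T.erase (k:ℕ) = W.image (fun x : Fin n => (x:ℕ)) :=
    by rw [hT, Finset.erase_insert hknotmem]
  set c : ℕ → ℝ := fun x => if hx : x < n then G2 (⟨x, hx⟩, k) else 0 with hc
  have hsum2 : ∑ j ∈ T.erase (k:ℕ), c j • (mp d (k:ℕ) - mp d j) = 0 := by
    rw [herase, Finset.sum_image (fun a _ b _ hab => Fin.val_injective hab)]
    funext m
    rw [Finset.sum_apply]
    simp only [Pi.zero_apply]
    have := hcoord m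
    rw [← this]
    apply Finset.sum_congr rfl
    intro a _
    rw [Pi.smul_apply, Pi.sub_apply, hc]
    simp only [a.isLt, dif_pos, Fin.eta, smul_eq_mul]
  have hall := keyIndep T hcardT (k:ℕ) (Finset.mem_insert_self _ _) c hsum2
  intro a ha
  have haT : (a:ℕ) ∈ T.erase (k:ℕ) := by
    rw [herase]; exact Finset.mem_image_of_mem _ ha
  have := hall _ haT
  rw [hc] at this
  simpa [a.isLt, Fin.eta] using this

lemma IF_indep (hd1 : d + 1 ≤ n) :
    LinearIndependent ℝ (fun e : ↥(IFset n d hd1) =>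
      rv n d (e : Fin n × Fin n).1 (e : Fin n × Fin n).2) := by
  classical
  rw [Fintype.linearIndependent_iff]
  intro g hg
  set G2 : Fin n × Fin n → ℝ :=
    fun e => if he : e ∈ IFset n d hd1 then g ⟨e, he⟩ else 0 with hG2
  have hsum : ∑ e ∈ IFset n d hd1, G2 e • rv n d e.1 e.2 = 0 := by
    rw [← hg, ← Finset.sum_coe_sort (IFset n d hd1) (fun e => G2 e • rv n d e.1 e.2)]
    apply Finset.sum_congr rfl
    intro x _
    rw [hG2]
    simp
  -- step 1 : edges into vertices above d
  have step1 : ∀ e ∈ IFset n d hd1, d < (e.2:ℕ) → G2 e = 0 := by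
    intro e he hd2
    set W : Finset (Fin n) := univ.filter (fun x : Fin n => (x:ℕ) < d) with hWdef
    have hWmem : ∀ x : Fin n, x ∈ W ↔ (x:ℕ) < d := by
      intro x; rw [hWdef]; simp
    have hcoord := coordRed G2 hsum e.2 W
      (fun x hx => fun hh => by have := (hWmem x).1 hx; rw [hh] at this; omega)
      ?_ ?_
    · have hkey := applyKey G2 e.2 W
        (fun x hx => by have := (hWmem x).1 hx; omega)
        (by rw [hWdef]; rw [card_val_lt d (by omega)])
        hcoord
      have he' := mem_IFset.1 he
      have he1 : e.1 ∈ W := by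
        rw [hWmem]
        rcases he' with ⟨h1, h2⟩ | ⟨h1, h2⟩
        · omega
        · exact h1
      have := hkey e.1 he1
      rwa [Prod.mk.eta] at this
    · -- himg
      ext x
      simp only [Finset.mem_filter, Finset.mem_image]
      constructor
      · rintro ⟨hx, hx2⟩
        rcases mem_IFset.1 hx with ⟨h1, h2⟩ | ⟨h1, h2⟩
        · rw [hx2] at h2; omega
        · exact ⟨x.1, (hWmem x.1).2 h1, by rw [← hx2]⟩
      · rintro ⟨a, ha, rfl⟩
        exact ⟨mem_IFset.2 (Or.inr ⟨(hWmem a).1 ha, hd2⟩), rfl⟩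
    · -- hzero : x.1 = e.2 impossible
      intro x hx _ hx1
      exfalso
      rcases mem_IFset.1 hx with ⟨h1, h2⟩ | ⟨h1, h2⟩ <;>
        (rw [hx1] at h1; omega)
  -- step 2 : descending induction on the clique part
  have step2 : ∀ t : ℕ, ∀ b : Fin n, (b:ℕ) ≤ d → d - (b:ℕ) < t →
      ∀ a : Fin n, (a, b) ∈ IFset n d hd1 → G2 (a, b) = 0 := by
    intro t
    induction t with
    | zero => intro b _ hlt; omega
    | succ t ih =>
      intro b hbd hbt a hab
      set W : Finset (Fin n) := univ.filter (fun x : Fin n => (x:ℕ) < (b:ℕ)) with hWdef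
      have hWmem : ∀ x : Fin n, x ∈ W ↔ (x:ℕ) < (b:ℕ) := by
        intro x; rw [hWdef]; simp
      have hcoord := coordRed G2 hsum b W
        (fun x hx => fun hh => by have := (hWmem x).1 hx; rw [hh] at this; omega)
        ?_ ?_
      · have hkey := applyKey G2 b W
          (fun x hx => (hWmem x).1 hx)
          (by rw [hWdef, card_val_lt (b:ℕ) (Nat.le_of_lt b.isLt)]; exact hbd)
          hcoord
        have ha1 : a ∈ W := by
          rw [hWmem]
          rcases mem_IFset.1 hab with ⟨h1, h2⟩ | ⟨h1, h2⟩
          · exact h1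
          · have h1' : (a:ℕ) < d := h1
            have h2' : d < (b:ℕ) := h2
            omega
        exact hkey a ha1
      · -- himg
        ext x
        simp only [Finset.mem_filter, Finset.mem_image]
        constructor
        · rintro ⟨hx, hx2⟩
          rcases mem_IFset.1 hx with ⟨h1, h2⟩ | ⟨h1, h2⟩
          · exact ⟨x.1, (hWmem x.1).2 (by rw [hx2] at h1; exact h1), by rw [← hx2]⟩
          · rw [hx2] at h2; omega
        · rintro ⟨c, hc, rfl⟩
          have := (hWmem c).1 hc
          exact ⟨mem_IFset.2 (Or.inl ⟨this, hbd⟩), rfl⟩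
      · -- hzero : x = (b, x.2) with x.2 ≠ b
        intro x hx hx2 hx1
        rcases mem_IFset.1 hx with ⟨h1, h2⟩ | ⟨h1, h2⟩
        · -- class 1 : b < x.2 ≤ d, use ih
          have hG : G2 (x.1, x.2) = 0 := by
            apply ih x.2 h2 (by rw [hx1] at h1; omega) x.1
            rw [Prod.mk.eta]; exact hx
          rwa [Prod.mk.eta] at hG
        · -- class 2 : d < x.2, use step1
          have hG : G2 x = 0 := step1 x hx h2
          exact hG
  -- finish
  intro e₀
  have he₀ := e₀.2
  have : G2 (e₀ : Fin n × Fin n) = 0 := by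
    rcases mem_IFset.1 he₀ with ⟨h1, h2⟩ | ⟨h1, h2⟩
    · have := step2 (d+1) (e₀ : Fin n × Fin n).2 h2 (by omega) (e₀ : Fin n × Fin n).1
        (by rw [Prod.mk.eta]; exact he₀)
      rwa [Prod.mk.eta] at this
    · exact step1 _ he₀ h2
  rw [hG2] at this
  simpa using this

end indep

lemma sat_row {n s : ℕ} (G : SimpleGraph (Fin n)) (hG : IsKSat G s)
    (d : ℕ) (hd : d + 2 = s) (u v : Fin n) (huv : u ≠ v) :
    rv n d u v ∈ Submodule.span ℝ
      {x | ∃ a b : Fin n, G.Adj a b ∧ x = rv n d a b} := by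
  by_cases hadj : G.Adj u v
  · exact Submodule.subset_span ⟨u, v, hadj, rfl⟩
  · have hnc := hG.2 u v huv hadj
    rw [SimpleGraph.CliqueFree] at hnc
    push_neg at hnc
    obtain ⟨t, ht⟩ := hnc
    have hadj' : ∀ a ∈ t, ∀ b ∈ t, a ≠ b → s(a,b) ≠ s(u,v) → G.Adj a b := by
      intro a ha b hb hab hne
      have := ht.1 (Finset.mem_coe.2 ha) (Finset.mem_coe.2 hb) hab
      rcases (SimpleGraph.sup_adj _ _ _ _).1 this with hh | hh
      · exact hh
      · exfalso
        rw [SimpleGraph.fromEdgeSet_adj] at hh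
        exact hne (Set.mem_singleton_iff.1 hh.1)
    have hut : u ∈ t ∧ v ∈ t := by
      by_contra hcon
      apply hG.1 t
      refine ⟨?_, ht.2⟩
      intro a ha b hb hab
      have := ht.1 ha hb hab
      rcases (SimpleGraph.sup_adj _ _ _ _).1 this with hh | hh
      · exact hh
      · exfalso
        rw [SimpleGraph.fromEdgeSet_adj] at hh
        have := Set.mem_singleton_iff.1 hh.1
        rw [Sym2.eq_iff] at this
        apply hcon
        rcases this with ⟨rfl, rfl⟩ | ⟨rfl, rfl⟩
        · exact ⟨ha, hb⟩
        · exact ⟨hb, ha⟩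
    have hstress := stress (n := n) (d := d) t (by rw [ht.2]; omega) u v hut.1 hut.2 huv
    refine Submodule.span_mono ?_ hstress
    rintro x ⟨a, b, hat, hbt, hab, hne, rfl⟩
    exact ⟨a, b, hadj' a hat b hbt hab hne, rfl⟩

theorem lower {n s : ℕ} (hs : 2 ≤ s) (hn : s ≤ n) (G : SimpleGraph (Fin n))
    (hG : IsKSat G s) :
    (s - 2) * (n - s + 2) + (s - 2).choose 2 ≤ G.edgeSet.ncard := by
  classical
  set d := s - 2 with hd
  have hd2 : d + 2 = s := by omega
  have hd1 : d + 1 ≤ n := by omega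
  have hfin : G.edgeSet.Finite := Set.toFinite _
  set EF := hfin.toFinset with hEF
  set rfun : Sym2 (Fin n) → (Fin n × Fin d → ℝ) :=
    Sym2.lift ⟨fun i j => rv n d i j, fun i j => rv_symm n d i j⟩ with hrfun
  set UG := Submodule.span ℝ ((EF.image rfun : Finset _) : Set (Fin n × Fin d → ℝ)) with hUG
  have hrow : ∀ a b : Fin n, G.Adj a b → rv n d a b ∈ UG := by
    intro a b hab
    apply Submodule.subset_span
    rw [Finset.coe_image]
    refine ⟨s(a,b), ?_, ?_⟩
    · rw [hEF, Set.Finite.coe_toFinset]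
      exact hab
    · rw [hrfun]
      simp [Sym2.lift_mk]
  have hall : ∀ u v : Fin n, u ≠ v → rv n d u v ∈ UG := by
    intro u v huv
    refine Submodule.span_le.2 ?_ (sat_row G hG d hd2 u v huv)
    rintro x ⟨a, b, hab, rfl⟩
    exact hrow a b hab
  have hsub : Set.range (fun e : ↥(IFset n d hd1) =>
      rv n d (e : Fin n × Fin n).1 (e : Fin n × Fin n).2) ⊆ ↑UG := by
    rintro x ⟨e, rfl⟩
    apply hall
    intro hEq
    rcases mem_IFset.1 e.2 with ⟨h1, _⟩ | ⟨h1, h2⟩ <;> rw [hEq] at h1 <;> omega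
  have h1 : (IFset n d hd1).card ≤ Module.finrank ℝ UG := by
    have heq := finrank_span_eq_card (IF_indep hd1)
    have hle := Submodule.finrank_mono (Submodule.span_le.2 hsub)
    rw [heq, Fintype.card_coe] at hle
    exact hle
  have h2 : Module.finrank ℝ UG ≤ EF.card :=
    le_trans (finrank_span_finset_le_card (EF.image rfun)) Finset.card_image_le
  have h3 : G.edgeSet.ncard = EF.card := Set.ncard_eq_toFinset_card _ hfin
  rw [card_IFset hd1] at h1
  have hch : (d+1).choose 2 = d.choose 2 + d := by
    rw [Nat.choose_succ_succ']
    simp [Nat.choose_one_right]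
    omega
  have he1 : n - (d+1) = n - s + 1 := by omega
  have he2 : d * (n - s + 2) = d * (n - s + 1) + d := by
    have hx : n - s + 2 = (n - s + 1) + 1 := by omega
    rw [hx, Nat.mul_succ]
  rw [hch, he1] at h1
  omega


instance sgDec (n k : ℕ) : DecidableRel (sGraph n k).Adj :=
  fun i j => inferInstanceAs (Decidable (i ≠ j ∧ ((i:ℕ) < k ∨ (j:ℕ) < k)))

lemma sg_adj {n k : ℕ} {i j : Fin n} :
    (sGraph n k).Adj i j ↔ i ≠ j ∧ ((i : ℕ) < k ∨ (j : ℕ) < k) := Iff.rfl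

lemma sg_cliquefree (n k : ℕ) : (sGraph n k).CliqueFree (k + 2) := by
  intro t ht
  have hcard : t.card = k + 2 := ht.2
  have hfilter : (t.filter (fun x : Fin n => (x:ℕ) < k)).card ≤ k := by
    rw [← Finset.card_image_of_injective (t.filter (fun x : Fin n => (x:ℕ) < k))
      Fin.val_injective]
    have hsub : (t.filter (fun x : Fin n => (x:ℕ) < k)).image Fin.val ⊆ Finset.range k := by
      intro x hx
      obtain ⟨y, hy, rfl⟩ := Finset.mem_image.1 hx
      exact Finset.mem_range.2 (Finset.mem_filter.1 hy).2
    calc _ ≤ (Finset.range k).card := Finset.card_le_card hsub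
    _ = k := Finset.card_range k
  have hsplit := Finset.card_filter_add_card_filter_not
    (s := t) (p := fun x : Fin n => (x:ℕ) < k)
  have h2 : 1 < (t.filter (fun x : Fin n => ¬ (x:ℕ) < k)).card := by omega
  obtain ⟨u, hu, v, hv, huv⟩ := Finset.one_lt_card.1 h2
  have hu' := Finset.mem_filter.1 hu
  have hv' := Finset.mem_filter.1 hv
  have hadj := ht.1 (Finset.mem_coe.2 hu'.1) (Finset.mem_coe.2 hv'.1) huv
  rcases sg_adj.1 hadj with ⟨_, h | h⟩
  · exact hu'.2 h
  · exact hv'.2 h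

lemma sg_sat (n k : ℕ) (hk : k + 2 ≤ n) (u v : Fin n) (huv : u ≠ v)
    (hnadj : ¬ (sGraph n k).Adj u v) :
    ¬ ((sGraph n k) ⊔ SimpleGraph.fromEdgeSet {s(u,v)}).CliqueFree (k+2) := by
  intro hcf
  have huk : k ≤ (u:ℕ) ∧ k ≤ (v:ℕ) := by
    have h1 : ¬((u:ℕ) < k ∨ (v:ℕ) < k) := fun h => hnadj ⟨huv, h⟩
    rcases not_or.1 h1 with ⟨h2, h3⟩
    exact ⟨le_of_not_gt h2, le_of_not_gt h3⟩
  set t₀ : Finset (Fin n) := univ.filter (fun x : Fin n => (x:ℕ) < k) with ht₀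
  have hmem₀ : ∀ x : Fin n, x ∈ t₀ ↔ (x:ℕ) < k := by intro x; rw [ht₀]; simp
  have hvt₀ : v ∉ t₀ := fun hh => by have := (hmem₀ v).1 hh; omega
  have hut : u ∉ insert v t₀ := by
    intro hh
    rcases Finset.mem_insert.1 hh with hh | hh
    · exact huv hh
    · have := (hmem₀ u).1 hh; omega
  apply hcf (insert u (insert v t₀))
  constructor
  · intro a ha b hb hab
    simp only [Finset.coe_insert, Set.mem_insert_iff, Finset.mem_coe] at ha hb
    have hcases : ∀ x : Fin n, x = u ∨ x = v ∨ x ∈ t₀ →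
        (x:ℕ) < k ∨ x = u ∨ x = v := by
      rintro x (rfl | rfl | hx)
      · right; left; rfl
      · right; right; rfl
      · left; exact (hmem₀ x).1 hx
    rcases hcases a ha with hak | rfl | rfl
    · exact (SimpleGraph.sup_adj _ _ _ _).2 (Or.inl ⟨hab, Or.inl hak⟩)
    · -- a = u
      rcases hcases b hb with hbk | rfl | rfl
      · exact (SimpleGraph.sup_adj _ _ _ _).2 (Or.inl ⟨hab, Or.inr hbk⟩)
      · exact absurd rfl hab
      · exact (SimpleGraph.sup_adj _ _ _ _).2 (Or.inr
          ((SimpleGraph.fromEdgeSet_adj _).2 ⟨rfl, hab⟩))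
    · -- a = v
      rcases hcases b hb with hbk | rfl | rfl
      · exact (SimpleGraph.sup_adj _ _ _ _).2 (Or.inl ⟨hab, Or.inr hbk⟩)
      · exact (SimpleGraph.sup_adj _ _ _ _).2 (Or.inr
          ((SimpleGraph.fromEdgeSet_adj _).2 ⟨Sym2.eq_swap, hab⟩))
      · exact absurd rfl hab
  · rw [Finset.card_insert_of_notMem hut, Finset.card_insert_of_notMem hvt₀,
      ht₀, card_val_lt k (by omega)]

lemma sg_card (n k : ℕ) (hk : k ≤ n) :
    (sGraph n k).edgeSet.ncard = k * (n - k) + k.choose 2 := by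
  classical
  rw [← SimpleGraph.coe_edgeFinset, Set.ncard_coe_finset]
  have hsum := SimpleGraph.sum_degrees_eq_twice_card_edges (sGraph n k)
  have hdeg : ∀ v : Fin n, (sGraph n k).degree v = if (v:ℕ) < k then n - 1 else k := by
    intro v
    rw [← SimpleGraph.card_neighborFinset_eq_degree, SimpleGraph.neighborFinset_eq_filter]
    by_cases hv : (v:ℕ) < k
    · rw [if_pos hv]
      have : univ.filter ((sGraph n k).Adj v) = univ.erase v := by
        ext w
        simp only [Finset.mem_filter, Finset.mem_univ, true_and, Finset.mem_erase, and_true]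
        rw [sg_adj]
        constructor
        · rintro ⟨h1, _⟩; exact fun hh => h1 hh.symm
        · intro h1; exact ⟨fun hh => h1 hh.symm, Or.inl hv⟩
      rw [this, Finset.card_erase_of_mem (Finset.mem_univ v), Finset.card_univ,
        Fintype.card_fin]
    · rw [if_neg hv]
      have : univ.filter ((sGraph n k).Adj v) = univ.filter (fun w : Fin n => (w:ℕ) < k) := by
        ext w
        simp only [Finset.mem_filter, Finset.mem_univ, true_and]
        rw [sg_adj]
        constructor
        · rintro ⟨h1, h | h⟩
          · exact absurd h hv
          · exact h
        · intro h
          refine ⟨?_, Or.inr h⟩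
          intro hh
          rw [hh] at hv
          exact hv h
      rw [this, card_val_lt k hk]
  rw [Finset.sum_congr rfl (fun v _ => hdeg v)] at hsum
  rw [Finset.sum_ite, Finset.sum_const, Finset.sum_const, smul_eq_mul, smul_eq_mul] at hsum
  have hc1 : (univ.filter (fun v : Fin n => (v:ℕ) < k)).card = k := card_val_lt k hk
  have hc2 : (univ.filter (fun v : Fin n => ¬ (v:ℕ) < k)).card = n - k := by
    have := Finset.card_filter_add_card_filter_not
      (s := (univ : Finset (Fin n))) (p := fun v : Fin n => (v:ℕ) < k)
    rw [hc1, Finset.card_univ, Fintype.card_fin] at this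
    omega
  rw [hc1, hc2] at hsum
  -- hsum : k * (n-1) + (n-k) * k = 2 * #edges
  have htc := two_choose k
  have htarget : 2 * (k * (n - k) + k.choose 2) = k * (n-1) + (n-k) * k := by
    obtain ⟨a, rfl⟩ : ∃ a, n = k + a := ⟨n - k, by omega⟩
    cases k with
    | zero => simp
    | succ k' =>
      have h1 : k' + 1 + a - (k'+1) = a := by omega
      have h2 : k' + 1 + a - 1 = k' + a := by omega
      have h3 : (k'+1) - 1 = k' := by omega
      rw [h1, h2]
      rw [h3] at htc
      -- 2 * ((k'+1) * a + ch) = (k'+1)*(k'+a) + a*(k'+1),  with 2*ch = (k'+1)*k'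
      nlinarith [htc]
  omega

end
end EHM

/-- Erdős–Hajnal–Moon: the minimum number of edges in a `K_s`-saturated graph on `n`
vertices is `(s-2)(n-s+2) + C(s-2, 2)`. -/
theorem stmt_0 (n s : ℕ) (hs : 2 ≤ s) (hn : s ≤ n) :
    IsLeast {m : ℕ | ∃ G : SimpleGraph (Fin n), IsKSat G s ∧ G.edgeSet.ncard = m}
      ((s - 2) * (n - s + 2) + (s - 2).choose 2) := by
  constructor
  · refine ⟨sGraph n (s-2), ⟨?_, ?_⟩, ?_⟩
    · have h : s - 2 + 2 = s := by omega
      rw [← h]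
      exact EHM.sg_cliquefree n (s-2)
    · intro u v huv hnadj
      have h : s - 2 + 2 = s := by omega
      rw [← h]
      exact EHM.sg_sat n (s-2) (by omega) u v huv hnadj
    · rw [EHM.sg_card n (s-2) (by omega)]
      have h : n - (s-2) = n - s + 2 := by omega
      rw [h]
  · rintro m ⟨G, hG, rfl⟩
    exact EHM.lower hs hn G hG
end

section
/- For all integers n and s with n ≥ s ≥ 2, if G is a K_s-saturated graph on n vertices with exactly (s−2)(n−s+2) + C(s−2, 2) edges, then G is isomorphic to S_{n,s−2}. -/
open Finset

section Aux

lemma choose_two_succ (k : ℕ) : (k+1).choose 2 = k.choose 2 + k := by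
  rw [Nat.choose_succ_succ, Nat.choose_one_right, Nat.add_comm]

lemma two_mul_choose_two (k : ℕ) : 2 * k.choose 2 = k * (k - 1) := by
  induction k with
  | zero => simp
  | succ k ih =>
    rw [choose_two_succ, Nat.mul_add, ih]
    cases k with
    | zero => simp
    | succ j => simp [Nat.succ_sub_one]; ring

lemma choose_two_add (a : ℕ) : ∀ b : ℕ, (a + b).choose 2 = a.choose 2 + a * b + b.choose 2 := by
  intro b
  induction b with
  | zero => simp
  | succ b ih =>
    have h1 : a + (b + 1) = (a + b) + 1 := by ring
    rw [h1, choose_two_succ, ih, choose_two_succ]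
    ring

end Aux


section Surplus

variable {V : Type*} [Fintype V] [DecidableEq V] (H : SimpleGraph V) [DecidableRel H.Adj] (m : ℕ)

lemma surplus
    (hcov : ∀ a b, H.Adj a b → ∃ C : Finset V, C.card ≤ m - 2 ∧ a ∉ C ∧ b ∉ C ∧
      (∀ x y, H.Adj x y → s(x,y) ≠ s(a,b) → x ∈ C ∨ y ∈ C))
    (htau : ∀ C : Finset V, (∀ x y, H.Adj x y → x ∈ C ∨ y ∈ C) → m - 1 ≤ C.card) :
    ∀ (S : Finset V),
      (∀ a ∈ S, ∀ b ∈ S, ¬ H.Adj a b) →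
      (∀ a ∈ S, 0 < H.degree a) →
      ∀ v ∈ S, S.card + H.degree v ≤ ((S.biUnion fun a => H.neighborFinset a).card + 1) := by
  classical
  have hmN : ∀ x w : V, w ∈ H.neighborFinset x ↔ H.Adj x w :=
    fun x w => SimpleGraph.mem_neighborFinset H x w
  suffices h : ∀ (k : ℕ) (S : Finset V), S.card ≤ k →
      (∀ a ∈ S, ∀ b ∈ S, ¬ H.Adj a b) →
      (∀ a ∈ S, 0 < H.degree a) →
      ∀ v ∈ S, S.card + H.degree v ≤ ((S.biUnion fun a => H.neighborFinset a).card + 1) by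
    exact fun S h1 h2 v hv => h S.card S le_rfl h1 h2 v hv
  intro k
  induction k with
  | zero =>
    intro S hS _ _ v hv
    rw [Finset.card_eq_zero.mp (Nat.le_zero.mp hS)] at hv
    simp at hv
  | succ k IH =>
    intro S hSk hind hdeg v hv
    by_contra hcon
    push_neg at hcon
    set NS := S.biUnion (fun a => H.neighborFinset a) with hNSdef
    have hmemNS : ∀ x, x ∈ NS ↔ ∃ a ∈ S, H.Adj a x := by
      intro x; simp [hNSdef, SimpleGraph.mem_neighborFinset]
    have hdisj : ∀ x ∈ NS, x ∉ S := by
      intro x hx hxS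
      obtain ⟨a, haS, hax⟩ := (hmemNS x).mp hx
      exact hind a haS x hxS hax
    have hvnbr : H.neighborFinset v ⊆ NS := by
      intro x hx; exact (hmemNS x).mpr ⟨v, hv, (hmN _ _).mp hx⟩
    have hd1 : 0 < H.degree v := hdeg v hv
    have hdeg_card : H.degree v = (H.neighborFinset v).card := rfl
    have hS2 : 2 ≤ S.card := by
      by_contra hlt
      push_neg at hlt
      have h1 : S.card = 1 := le_antisymm (by omega) (Finset.card_pos.mpr ⟨v, hv⟩)
      obtain ⟨a, ha⟩ := Finset.card_eq_one.mp h1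
      have hva : v = a := by rw [ha] at hv; simpa using hv
      have hNSeq : NS = H.neighborFinset v := by
        rw [hNSdef, ha, ← hva, Finset.singleton_biUnion]
      rw [hNSeq, ← hdeg_card] at hcon
      omega
    set Z := NS \ H.neighborFinset v with hZdef
    have hnbrle : (H.neighborFinset v).card ≤ NS.card := Finset.card_le_card hvnbr
    have hZcard : Z.card + H.degree v = NS.card := by
      rw [hZdef, Finset.card_sdiff_of_subset hvnbr]
      omega
    -- Hall condition for matching from Z into S.erase v
    have hHall : ∀ t : Finset {z // z ∈ Z},
        t.card ≤ (t.biUnion fun z => H.neighborFinset z.1 ∩ S.erase v).card := by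
      intro t
      by_contra hlt
      push_neg at hlt
      set NB := t.biUnion (fun z => H.neighborFinset z.1 ∩ S.erase v) with hNBdef
      have htne : t.Nonempty := by
        rcases Finset.eq_empty_or_nonempty t with h | h
        · rw [h] at hlt; simp at hlt
        · exact h
      set Z' := t.image (fun z => z.1) with hZ'def
      have hZ'card : Z'.card = t.card := Finset.card_image_of_injective _ Subtype.val_injective
      have hZ'Z : Z' ⊆ Z := by
        intro z hz
        obtain ⟨w, _, rfl⟩ := Finset.mem_image.mp hz
        exact w.2
      have hNBsub : NB ⊆ S.erase v := by
        intro x hx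
        obtain ⟨z, _, hz⟩ := Finset.mem_biUnion.mp hx
        exact (Finset.mem_inter.mp hz).2
      have hNBne : NB.Nonempty := by
        obtain ⟨z0, hz0⟩ := htne
        have hzNS : z0.1 ∈ NS := (Finset.mem_sdiff.mp z0.2).1
        have hznv : z0.1 ∉ H.neighborFinset v := (Finset.mem_sdiff.mp z0.2).2
        obtain ⟨a, haS, hax⟩ := (hmemNS z0.1).mp hzNS
        refine ⟨a, Finset.mem_biUnion.mpr ⟨z0, hz0, Finset.mem_inter.mpr ⟨?_, ?_⟩⟩⟩
        · exact (hmN _ _).mpr hax.symm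
        · refine Finset.mem_erase.mpr ⟨?_, haS⟩
          rintro rfl
          exact hznv ((hmN _ _).mpr hax)
      set T := (S.erase v) \ NB with hTdef
      have hNBcard_le : NB.card ≤ S.card - 1 := by
        have := Finset.card_le_card hNBsub
        rw [Finset.card_erase_of_mem hv] at this
        exact this
      have hTcard : T.card + NB.card = S.card - 1 := by
        rw [hTdef, Finset.card_sdiff_of_subset hNBsub, Finset.card_erase_of_mem hv]
        omega
      have hvT : v ∉ T := by
        intro h; exact (Finset.mem_erase.mp ((Finset.mem_sdiff.mp h).1)).1 rfl
      set B := insert v T with hBdef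
      have hBsub : B ⊆ S := by
        intro x hx
        rcases Finset.mem_insert.mp hx with rfl | hx
        · exact hv
        · exact Finset.mem_of_mem_erase ((Finset.mem_sdiff.mp hx).1)
      have hBcard : B.card = T.card + 1 := Finset.card_insert_of_notMem hvT
      have hNB1 : 1 ≤ NB.card := Finset.card_pos.mpr hNBne
      have hBk : B.card ≤ k := by omega
      have hIH := IH B hBk
        (fun a ha b hb => hind a (hBsub ha) b (hBsub hb))
        (fun a ha => hdeg a (hBsub ha)) v (Finset.mem_insert_self v T)
      set NT := T.biUnion (fun a => H.neighborFinset a) with hNTdef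
      have hNB_sub : (B.biUnion fun a => H.neighborFinset a) ⊆
          H.neighborFinset v ∪ (NT \ H.neighborFinset v) := by
        intro x hx
        obtain ⟨a, ha, hax⟩ := Finset.mem_biUnion.mp hx
        by_cases hxv : x ∈ H.neighborFinset v
        · exact Finset.mem_union_left _ hxv
        · rcases Finset.mem_insert.mp ha with rfl | ha
          · exact absurd hax hxv
          · exact Finset.mem_union_right _
              (Finset.mem_sdiff.mpr ⟨Finset.mem_biUnion.mpr ⟨a, ha, hax⟩, hxv⟩)
      have hcard1 : T.card ≤ (NT \ H.neighborFinset v).card := by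
        have h2 := Finset.card_le_card hNB_sub
        have h3 := Finset.card_union_le (H.neighborFinset v) (NT \ H.neighborFinset v)
        omega
      have hsub2 : NT \ H.neighborFinset v ⊆ Z \ Z' := by
        intro x hx
        obtain ⟨hxNT, hxnv⟩ := Finset.mem_sdiff.mp hx
        obtain ⟨a, haT, hax⟩ := Finset.mem_biUnion.mp hxNT
        have haSe : a ∈ S.erase v := (Finset.mem_sdiff.mp haT).1
        have hadj : H.Adj a x := (hmN _ _).mp hax
        have hxNS : x ∈ NS := (hmemNS x).mpr ⟨a, Finset.mem_of_mem_erase haSe, hadj⟩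
        refine Finset.mem_sdiff.mpr ⟨Finset.mem_sdiff.mpr ⟨hxNS, hxnv⟩, ?_⟩
        intro hxZ'
        obtain ⟨z, hzt, hzx⟩ := Finset.mem_image.mp hxZ'
        have haNB : a ∈ NB := by
          refine Finset.mem_biUnion.mpr ⟨z, hzt, Finset.mem_inter.mpr ⟨?_, haSe⟩⟩
          rw [hzx]
          exact (hmN _ _).mpr hadj.symm
        exact (Finset.mem_sdiff.mp haT).2 haNB
      have hcard2 : (Z \ Z').card + Z'.card = Z.card := by
        have := Finset.card_le_card hZ'Z
        rw [Finset.card_sdiff_of_subset hZ'Z]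
        omega
      have hcard3 := Finset.card_le_card hsub2
      omega
    obtain ⟨f, hfinj, hfmem⟩ :=
      (Finset.all_card_le_biUnion_card_iff_exists_injective
        (fun z : {z // z ∈ Z} => H.neighborFinset z.1 ∩ S.erase v)).mp hHall
    have hfS : ∀ z, f z ∈ S.erase v := fun z => (Finset.mem_inter.mp (hfmem z)).2
    have hfadj : ∀ z, H.Adj z.1 (f z) :=
      fun z => (hmN _ _).mp (Finset.mem_inter.mp (hfmem z)).1
    set Im := Z.attach.image f with hImdef
    have hImcard : Im.card = Z.card := by
      rw [hImdef, Finset.card_image_of_injective _ hfinj, Finset.card_attach]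
    set U := (S.erase v) \ Im with hUdef
    have hUne : U.Nonempty := by
      refine Finset.card_pos.mp ?_
      have h1 := Finset.le_card_sdiff Im (S.erase v)
      rw [Finset.card_erase_of_mem hv] at h1
      rw [hUdef]
      omega
    obtain ⟨u, hu⟩ := hUne
    have huS : u ∈ S.erase v := (Finset.mem_sdiff.mp hu).1
    have huIm : u ∉ Im := (Finset.mem_sdiff.mp hu).2
    choose Cf hCcard hCv hCy hCcov using fun (y : V) (h : H.Adj v y) => hcov v y h
    -- tightness of covers for edges at v
    have key : ∀ (y : V) (hy : H.Adj v y),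
        (∀ a, a ∈ S.erase v → a ∉ Im → a ∉ Cf y hy) ∧
        (∀ z (hz : z ∈ Z), z ∈ Cf y hy → f ⟨z, hz⟩ ∉ Cf y hy) := by
      intro y hy
      have hyNS : y ∈ NS := hvnbr ((hmN _ _).mpr hy)
      have hyS : y ∉ S := hdisj y hyNS
      have hvy : v ≠ y := hy.ne
      set C := Cf y hy with hCdef
      set P1 := (H.neighborFinset v).erase y with hP1def
      have hP1C : P1 ⊆ C := by
        intro x hx
        obtain ⟨hxy, hxnbr⟩ := Finset.mem_erase.mp hx
        have hadj : H.Adj v x := (hmN _ _).mp hxnbr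
        have hne : s(v,x) ≠ s(v,y) := by
          intro h
          rcases Sym2.eq_iff.mp h with ⟨_, h2⟩ | ⟨h1, _⟩
          · exact hxy h2
          · exact hvy h1
        rcases hCcov y hy v x hadj hne with h | h
        · exact absurd h (hCv y hy)
        · exact h
      have hP1card : P1.card + 1 = H.degree v := by
        rw [hP1def, Finset.card_erase_of_mem ((hmN _ _).mpr hy), ← hdeg_card]
        omega
      set j : {z // z ∈ Z} → V := fun z => if z.1 ∈ C then z.1 else f z with hjdef
      have hjC : ∀ z, j z ∈ C := by
        intro z
        by_cases h : z.1 ∈ C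
        · simp [hjdef, h]
        · simp only [hjdef, if_neg h]
          have hzS : z.1 ∉ S := hdisj z.1 (Finset.mem_sdiff.mp z.2).1
          have hzv : z.1 ≠ v := fun hh => hzS (hh ▸ hv)
          have hfzv : f z ≠ v := fun hh => (Finset.mem_erase.mp (hfS z)).1 hh
          have hne : s(f z, z.1) ≠ s(v,y) := by
            intro hh
            rcases Sym2.eq_iff.mp hh with ⟨h1, _⟩ | ⟨_, h2⟩
            · exact hfzv h1
            · exact hzv h2
          rcases hCcov y hy (f z) z.1 (hfadj z).symm hne with hh | hh
          · exact hh
          · exact absurd hh h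
      have hjinj : Set.InjOn j Z.attach := by
        intro z _ z' _ hzz
        by_cases h : z.1 ∈ C <;> by_cases h' : z'.1 ∈ C
        · simp only [hjdef, if_pos h, if_pos h'] at hzz
          exact Subtype.ext hzz
        · simp only [hjdef, if_pos h, if_neg h'] at hzz
          exfalso
          have hzS : z.1 ∉ S := hdisj z.1 (Finset.mem_sdiff.mp z.2).1
          exact hzS (hzz ▸ Finset.mem_of_mem_erase (hfS z'))
        · simp only [hjdef, if_neg h, if_pos h'] at hzz
          exfalso
          have hzS : z'.1 ∉ S := hdisj z'.1 (Finset.mem_sdiff.mp z'.2).1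
          exact hzS (hzz ▸ Finset.mem_of_mem_erase (hfS z))
        · simp only [hjdef, if_neg h, if_neg h'] at hzz
          exact hfinj hzz
      set P2 := Z.attach.image j with hP2def
      have hP2card : P2.card = Z.card := by
        rw [hP2def, Finset.card_image_of_injOn hjinj, Finset.card_attach]
      have hP2C : P2 ⊆ C := by
        intro x hx
        obtain ⟨z, _, rfl⟩ := Finset.mem_image.mp hx
        exact hjC z
      set P3 := C \ (S ∪ NS) with hP3def
      have hP3cov : m - 1 ≤ P3.card + NS.card := by
        have hcover : ∀ x y', H.Adj x y' → x ∈ P3 ∪ NS ∨ y' ∈ P3 ∪ NS := by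
          intro x y' hadj
          by_cases hxNS : x ∈ NS
          · exact Or.inl (Finset.mem_union_right _ hxNS)
          by_cases hyNS : y' ∈ NS
          · exact Or.inr (Finset.mem_union_right _ hyNS)
          by_cases hxS : x ∈ S
          · exact Or.inr (Finset.mem_union_right _ ((hmemNS y').mpr ⟨x, hxS, hadj⟩))
          by_cases hyS' : y' ∈ S
          · exact Or.inl (Finset.mem_union_right _ ((hmemNS x).mpr ⟨y', hyS', hadj.symm⟩))
          have hne : s(x,y') ≠ s(v,y) := by
            intro hh
            rcases Sym2.eq_iff.mp hh with ⟨h1,_⟩ | ⟨_,h2⟩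
            · exact hxS (h1 ▸ hv)
            · exact hyS' (h2 ▸ hv)
          rcases hCcov y hy x y' hadj hne with hh | hh
          · refine Or.inl (Finset.mem_union_left _ (Finset.mem_sdiff.mpr ⟨hh, ?_⟩))
            simp [hxS, hxNS]
          · refine Or.inr (Finset.mem_union_left _ (Finset.mem_sdiff.mpr ⟨hh, ?_⟩))
            simp [hyS', hyNS]
        have h1 := htau _ hcover
        have h2 := Finset.card_union_le P3 NS
        omega
      have hd12 : Disjoint P1 P2 := by
        rw [Finset.disjoint_left]
        intro x hx1 hx2
        have hxnbr : x ∈ H.neighborFinset v := Finset.mem_of_mem_erase hx1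
        obtain ⟨z, _, rfl⟩ := Finset.mem_image.mp hx2
        by_cases h : z.1 ∈ C
        · have : j z = z.1 := by simp [hjdef, h]
          rw [this] at hxnbr
          exact (Finset.mem_sdiff.mp z.2).2 hxnbr
        · have : j z = f z := by simp [hjdef, h]
          rw [this] at hxnbr
          exact hdisj _ (hvnbr hxnbr) (Finset.mem_of_mem_erase (hfS z))
      have hd13 : Disjoint P1 P3 := by
        rw [Finset.disjoint_left]
        intro x hx1 hx3
        exact (Finset.mem_sdiff.mp hx3).2
          (Finset.mem_union_right _ (hvnbr (Finset.mem_of_mem_erase hx1)))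
      have hd23 : Disjoint P2 P3 := by
        rw [Finset.disjoint_left]
        intro x hx2 hx3
        obtain ⟨z, _, rfl⟩ := Finset.mem_image.mp hx2
        by_cases h : z.1 ∈ C
        · have hjz : j z = z.1 := by simp [hjdef, h]
          exact (Finset.mem_sdiff.mp hx3).2
            (Finset.mem_union_right _ (by rw [hjz]; exact (Finset.mem_sdiff.mp z.2).1))
        · have hjz : j z = f z := by simp [hjdef, h]
          exact (Finset.mem_sdiff.mp hx3).2
            (Finset.mem_union_left _ (by rw [hjz]; exact Finset.mem_of_mem_erase (hfS z)))
      set P := P1 ∪ P2 ∪ P3 with hPdef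
      have hPC : P ⊆ C := by
        rw [hPdef]
        refine Finset.union_subset (Finset.union_subset hP1C hP2C) ?_
        rw [hP3def]; exact Finset.sdiff_subset
      have hPcard : P.card = P1.card + P2.card + P3.card := by
        rw [hPdef, Finset.card_union_of_disjoint, Finset.card_union_of_disjoint hd12]
        rw [Finset.disjoint_union_left]
        exact ⟨hd13, hd23⟩
      have hCcard' := hCcard y hy
      rw [← hCdef] at hCcard'
      have hCP : C = P := by
        refine (Finset.eq_of_subset_of_card_le hPC ?_).symm
        omega
      constructor
      · intro a haSe haIm haC
        have haS : a ∈ S := Finset.mem_of_mem_erase haSe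
        rw [hCP, hPdef] at haC
        rcases Finset.mem_union.mp haC with hc | hc
        · rcases Finset.mem_union.mp hc with hc | hc
          · exact hdisj a (hvnbr (Finset.mem_of_mem_erase hc)) haS
          · obtain ⟨z, _, hz⟩ := Finset.mem_image.mp hc
            by_cases h : z.1 ∈ C
            · have : j z = z.1 := by simp [hjdef, h]
              rw [this] at hz
              exact hdisj a (hz ▸ (Finset.mem_sdiff.mp z.2).1) haS
            · have : j z = f z := by simp [hjdef, h]
              rw [this] at hz
              exact haIm (hz ▸ Finset.mem_image.mpr ⟨z, Finset.mem_attach _ _, rfl⟩)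
        · exact (Finset.mem_sdiff.mp hc).2 (Finset.mem_union_left _ haS)
      · intro z hz hzC hfzC
        have hfzS : f ⟨z, hz⟩ ∈ S := Finset.mem_of_mem_erase (hfS ⟨z, hz⟩)
        rw [hCP, hPdef] at hfzC
        rcases Finset.mem_union.mp hfzC with hc | hc
        · rcases Finset.mem_union.mp hc with hc | hc
          · exact hdisj _ (hvnbr (Finset.mem_of_mem_erase hc)) hfzS
          · obtain ⟨z', _, hz'⟩ := Finset.mem_image.mp hc
            by_cases h : z'.1 ∈ C
            · have : j z' = z'.1 := by simp [hjdef, h]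
              rw [this] at hz'
              exact hdisj _ (hz' ▸ (Finset.mem_sdiff.mp z'.2).1) hfzS
            · have hjz : j z' = f z' := by simp [hjdef, h]
              rw [hjz] at hz'
              have : z' = ⟨z, hz⟩ := hfinj hz'
              rw [this] at h
              exact h hzC
        · exact (Finset.mem_sdiff.mp hc).2 (Finset.mem_union_left _ hfzS)
    have huC : ∀ (y : V) (hy : H.Adj v y), u ∉ Cf y hy := fun y hy => (key y hy).1 u huS huIm
    set A := (S.erase v).filter (fun a => ∀ (y : V) (hy : H.Adj v y), a ∉ Cf y hy) with hAdef
    have huA : u ∈ A := Finset.mem_filter.mpr ⟨huS, huC⟩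
    have hAsub : A ⊆ S.erase v := Finset.filter_subset _ _
    have hAnbr : ∀ a ∈ A, ∀ w ∈ H.neighborFinset a,
        w ∈ Z ∧ ∀ (y) (hy : H.Adj v y), w ∈ Cf y hy := by
      intro a ha w hw
      obtain ⟨haSe, haP⟩ := Finset.mem_filter.mp ha
      have haS : a ∈ S := Finset.mem_of_mem_erase haSe
      have hav : a ≠ v := (Finset.mem_erase.mp haSe).1
      have hadj : H.Adj a w := (hmN _ _).mp hw
      have hwNS : w ∈ NS := (hmemNS w).mpr ⟨a, haS, hadj⟩
      have hwS : w ∉ S := hdisj w hwNS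
      have hwv : w ≠ v := fun hh => hwS (hh ▸ hv)
      have hwC : ∀ (y) (hy : H.Adj v y), w ∈ Cf y hy := by
        intro y hy
        have hne : s(a,w) ≠ s(v,y) := by
          intro hh
          rcases Sym2.eq_iff.mp hh with ⟨h1,_⟩ | ⟨_,h2⟩
          · exact hav h1
          · exact hwv h2
        rcases hCcov y hy a w hadj hne with hh | hh
        · exact absurd hh (haP y hy)
        · exact hh
      have hwnv : w ∉ H.neighborFinset v := by
        intro hwnv
        have hvw : H.Adj v w := (hmN _ _).mp hwnv
        exact (hCy w hvw) (hwC w hvw)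
      exact ⟨Finset.mem_sdiff.mpr ⟨hwNS, hwnv⟩, hwC⟩
    have hfA : ∀ a ∈ A, ∀ w, w ∈ H.neighborFinset a → ∀ (hwZ : w ∈ Z), f ⟨w, hwZ⟩ ∈ A := by
      intro a ha w hw hwZ
      have h1 := (hAnbr a ha w hw).2
      exact Finset.mem_filter.mpr ⟨hfS _, fun y hy => (key y hy).2 w hwZ (h1 y hy)⟩
    set NA := A.biUnion (fun a => H.neighborFinset a) with hNAdef
    have hNAZ : NA ⊆ Z := by
      intro w hw
      obtain ⟨a, ha, hwa⟩ := Finset.mem_biUnion.mp hw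
      exact (hAnbr a ha w hwa).1
    have hNAcard : NA.card ≤ (A ∩ Im).card := by
      refine Finset.card_le_card_of_injOn (fun w => if hw : w ∈ Z then f ⟨w, hw⟩ else w) ?_ ?_
      · intro w hwNA
        have hwZ : w ∈ Z := hNAZ hwNA
        obtain ⟨a, ha, hwa⟩ := Finset.mem_biUnion.mp hwNA
        simp only [dif_pos hwZ]
        exact Finset.mem_inter.mpr ⟨hfA a ha w hwa hwZ,
          Finset.mem_image.mpr ⟨⟨w, hwZ⟩, Finset.mem_attach _ _, rfl⟩⟩
      · intro w hw w' hw' hww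
        have hwZ : w ∈ Z := hNAZ hw
        have hw'Z : w' ∈ Z := hNAZ hw'
        simp only [dif_pos hwZ, dif_pos hw'Z] at hww
        exact congrArg Subtype.val (hfinj hww)
    have hANe : (A ∩ Im).card + 1 ≤ A.card := by
      have hsub : A ∩ Im ⊆ A.erase u := by
        intro x hx
        refine Finset.mem_erase.mpr ⟨?_, (Finset.mem_inter.mp hx).1⟩
        rintro rfl
        exact huIm (Finset.mem_inter.mp hx).2
      have h2 := Finset.card_le_card hsub
      rw [Finset.card_erase_of_mem huA] at h2
      have h3 := Finset.card_pos.mpr ⟨u, huA⟩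
      omega
    by_cases hAeq : A = S.erase v
    · have hcard : (S.erase v).card ≤ k := by
        rw [Finset.card_erase_of_mem hv]; omega
      have hIH := IH (S.erase v) hcard
        (fun a ha b hb => hind a (Finset.mem_of_mem_erase ha) b (Finset.mem_of_mem_erase hb))
        (fun a ha => hdeg a (Finset.mem_of_mem_erase ha)) u huS
      rw [← hAeq, ← hNAdef] at hIH
      have hdu : 0 < H.degree u := hdeg u (Finset.mem_of_mem_erase huS)
      omega
    · have hAlt : A.card < (S.erase v).card :=
        Finset.card_lt_card (Finset.ssubset_iff_subset_ne.mpr ⟨hAsub, hAeq⟩)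
      rw [Finset.card_erase_of_mem hv] at hAlt
      set B := insert v A with hBdef
      have hvA : v ∉ A := fun h => (Finset.mem_erase.mp (hAsub h)).1 rfl
      have hBcard : B.card = A.card + 1 := Finset.card_insert_of_notMem hvA
      have hBsub : B ⊆ S := by
        intro x hx
        rcases Finset.mem_insert.mp hx with rfl | hx
        · exact hv
        · exact Finset.mem_of_mem_erase (hAsub hx)
      have hBk : B.card ≤ k := by omega
      have hIH := IH B hBk (fun a ha b hb => hind a (hBsub ha) b (hBsub hb))
        (fun a ha => hdeg a (hBsub ha)) v (Finset.mem_insert_self _ _)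
      have hdisjvNA : Disjoint (H.neighborFinset v) NA := by
        rw [Finset.disjoint_left]
        intro x hx hxNA
        exact (Finset.mem_sdiff.mp (hNAZ hxNA)).2 hx
      have hBUcard : (B.biUnion fun a => H.neighborFinset a).card = H.degree v + NA.card := by
        rw [hBdef, Finset.biUnion_insert, Finset.card_union_of_disjoint hdisjvNA, ← hdeg_card]
      rw [hBUcard] at hIH
      omega

end Surplus

section LemC

variable {V : Type*} [Fintype V] [DecidableEq V] (H : SimpleGraph V) [DecidableRel H.Adj] (m : ℕ)

lemma lemC (hm : 2 ≤ m)
    (hcov : ∀ a b, H.Adj a b → ∃ C : Finset V, C.card ≤ m - 2 ∧ a ∉ C ∧ b ∉ C ∧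
      (∀ x y, H.Adj x y → s(x,y) ≠ s(a,b) → x ∈ C ∨ y ∈ C))
    (htau : ∀ C : Finset V, (∀ x y, H.Adj x y → x ∈ C ∨ y ∈ C) → m - 1 ≤ C.card)
    (hE : H.edgeFinset.card = m.choose 2) :
    ∃ K : Finset V, K.card = m ∧ ∀ a b, H.Adj a b ↔ (a ∈ K ∧ b ∈ K ∧ a ≠ b) := by
  classical
  have hmN : ∀ x w : V, w ∈ H.neighborFinset x ↔ H.Adj x w :=
    fun x w => SimpleGraph.mem_neighborFinset H x w
  set V0 := Finset.univ.filter (fun v : V => 0 < H.degree v) with hV0def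
  have hmemV0 : ∀ v : V, v ∈ V0 ↔ 0 < H.degree v := by
    intro v; simp [hV0def]
  have hnbrV0 : ∀ v : V, H.neighborFinset v ⊆ V0.erase v := by
    intro v w hw
    have hadj : H.Adj v w := (hmN v w).mp hw
    refine Finset.mem_erase.mpr ⟨hadj.ne', ?_⟩
    refine (hmemV0 w).mpr ?_
    rw [← SimpleGraph.card_neighborSet_eq_degree]
    rw [Fintype.card_pos_iff]
    exact ⟨⟨v, hadj.symm⟩⟩
  have hdeg_eq : ∀ v : V, H.degree v = (H.neighborFinset v).card := fun _ => rfl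
  have hdegle : ∀ v : V, H.degree v + 1 ≤ V0.card ∨ H.degree v = 0 := by
    intro v
    rcases Nat.eq_zero_or_pos (H.degree v) with h | h
    · exact Or.inr h
    · left
      have h1 := Finset.card_le_card (hnbrV0 v)
      have hvV0 : v ∈ V0 := (hmemV0 v).mpr h
      rw [Finset.card_erase_of_mem hvV0] at h1
      have h2 := Finset.card_pos.mpr ⟨v, hvV0⟩
      rw [← hdeg_eq] at h1
      omega
  have hsum : ∑ v ∈ V0, H.degree v = m * (m - 1) := by
    have h1 : ∑ v, H.degree v = 2 * H.edgeFinset.card :=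
      SimpleGraph.sum_degrees_eq_twice_card_edges H
    have h2 : ∑ v ∈ V0, H.degree v = ∑ v, H.degree v := by
      refine Finset.sum_subset (Finset.subset_univ _) ?_
      intro x _ hx
      have hx' : ¬ 0 < H.degree x := fun hc => hx ((hmemV0 x).mpr hc)
      omega
    rw [h2, h1, hE, two_mul_choose_two]
  -- key inequality per vertex
  have hkey : ∀ v ∈ V0, V0.card + H.degree v ≤ 2 * m - 1 := by
    intro v hv
    have hd : 0 < H.degree v := (hmemV0 v).mp hv
    obtain ⟨w, hw⟩ := Finset.card_pos.mp (by rw [← hdeg_eq]; exact hd)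
    have hadj : H.Adj v w := (hmN v w).mp hw
    obtain ⟨C, hC1, hC2, hC3, hC4⟩ := hcov v w hadj
    set I := (V0 \ C).erase w with hIdef
    have hvI : v ∈ I := by
      refine Finset.mem_erase.mpr ⟨hadj.ne, Finset.mem_sdiff.mpr ⟨hv, hC2⟩⟩
    have hIindep : ∀ a ∈ I, ∀ b ∈ I, ¬ H.Adj a b := by
      intro a ha b hb hab
      have haw : a ≠ w := (Finset.mem_erase.mp ha).1
      have hbw : b ≠ w := (Finset.mem_erase.mp hb).1
      have haC : a ∉ C := (Finset.mem_sdiff.mp (Finset.mem_of_mem_erase ha)).2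
      have hbC : b ∉ C := (Finset.mem_sdiff.mp (Finset.mem_of_mem_erase hb)).2
      have hne : s(a,b) ≠ s(v,w) := by
        intro hh
        rcases Sym2.eq_iff.mp hh with ⟨_, h2⟩ | ⟨h1, _⟩
        · exact hbw h2
        · exact haw h1
      rcases hC4 a b hab hne with hh | hh
      · exact haC hh
      · exact hbC hh
    have hInon : ∀ a ∈ I, 0 < H.degree a :=
      fun a ha => (hmemV0 a).mp (Finset.mem_sdiff.mp (Finset.mem_of_mem_erase ha)).1
    have hsur := surplus H m hcov htau I hIindep hInon v hvI
    set NI := I.biUnion (fun a => H.neighborFinset a) with hNIdef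
    have hNIV0 : NI ⊆ V0 := by
      intro x hx
      obtain ⟨a, _, hax⟩ := Finset.mem_biUnion.mp hx
      exact Finset.mem_of_mem_erase (hnbrV0 a hax)
    have hNII : ∀ x ∈ NI, x ∉ I := by
      intro x hx hxI
      obtain ⟨a, ha, hax⟩ := Finset.mem_biUnion.mp hx
      exact hIindep a ha x hxI ((hmN a x).mp hax)
    have hNIcard : NI.card + I.card ≤ V0.card := by
      rw [← Finset.card_union_of_disjoint (Finset.disjoint_left.mpr hNII)]
      refine Finset.card_le_card ?_
      intro x hx
      rcases Finset.mem_union.mp hx with h | h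
      · exact hNIV0 h
      · exact (Finset.mem_sdiff.mp (Finset.mem_of_mem_erase h)).1
    have hV0sub : V0 ⊆ I ∪ C ∪ {w} := by
      intro x hx
      by_cases hxw : x = w
      · exact Finset.mem_union_right _ (by simp [hxw])
      by_cases hxC : x ∈ C
      · exact Finset.mem_union_left _ (Finset.mem_union_right _ hxC)
      · exact Finset.mem_union_left _ (Finset.mem_union_left _
          (Finset.mem_erase.mpr ⟨hxw, Finset.mem_sdiff.mpr ⟨hx, hxC⟩⟩))
    have hV0card : V0.card ≤ I.card + C.card + 1 := by
      calc V0.card ≤ (I ∪ C ∪ {w}).card := Finset.card_le_card hV0sub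
        _ ≤ (I ∪ C).card + 1 := by
            have := Finset.card_union_le (I ∪ C) {w}
            simpa using this
        _ ≤ I.card + C.card + 1 := by
            have := Finset.card_union_le I C
            omega
    omega
  have hV0ne : V0.Nonempty := by
    rcases Finset.eq_empty_or_nonempty V0 with h | h
    · exfalso
      rw [h, Finset.sum_empty] at hsum
      rcases Nat.mul_eq_zero.mp hsum.symm with h1 | h1 <;> omega
    · exact h
  -- V0.card = m
  have hn0m : V0.card = m := by
    have h1 : m * (m - 1) ≤ V0.card * (V0.card - 1) := by
      rw [← hsum]
      calc ∑ v ∈ V0, H.degree v ≤ ∑ _v ∈ V0, (V0.card - 1) := by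
            refine Finset.sum_le_sum ?_
            intro i hi
            have := hdegle i
            have := (hmemV0 i).mp hi
            omega
        _ = V0.card * (V0.card - 1) := by rw [Finset.sum_const, smul_eq_mul]
    have h2 : m * (m - 1) + V0.card * V0.card ≤ V0.card * (2 * m - 1) := by
      have h3 : ∑ v ∈ V0, (V0.card + H.degree v) ≤ ∑ _v ∈ V0, (2 * m - 1) :=
        Finset.sum_le_sum hkey
      rw [Finset.sum_add_distrib, Finset.sum_const, Finset.sum_const, smul_eq_mul,
        smul_eq_mul, hsum] at h3
      omega
    -- conclude
    obtain ⟨b, hb⟩ : ∃ b, m = b + 2 := ⟨m - 2, by omega⟩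
    subst hb
    rcases Nat.lt_trichotomy V0.card (b+2) with h | h | h
    · exfalso
      have h1' : (b+2)*(b+1) ≤ V0.card * (V0.card - 1) := by simpa using h1
      have hbb : V0.card * (V0.card - 1) ≤ (b+1) * b :=
        Nat.mul_le_mul (by omega) (by omega)
      nlinarith
    · exact h
    · exfalso
      obtain ⟨a, ha, ha1⟩ : ∃ a, V0.card = (b+2) + a ∧ 1 ≤ a := ⟨V0.card - (b+2), by omega, by omega⟩
      rw [ha] at h2
      have e1 : (b+2) - 1 = b + 1 := by omega
      have e2 : 2*(b+2) - 1 = 2*b + 3 := by omega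
      rw [e1, e2] at h2
      nlinarith
  -- all degrees equal m - 1
  have hdegall : ∀ v ∈ V0, H.degree v = m - 1 := by
    intro v hv
    by_contra hne
    have hlt : H.degree v < m - 1 := by
      have := hkey v hv
      rw [hn0m] at this
      omega
    have : ∑ w ∈ V0, H.degree w < ∑ _w ∈ V0, (m - 1) := by
      refine Finset.sum_lt_sum ?_ ⟨v, hv, hlt⟩
      intro i hi
      have := hkey i hi
      rw [hn0m] at this
      omega
    rw [hsum, Finset.sum_const, smul_eq_mul, hn0m] at this
    omega
  refine ⟨V0, hn0m, ?_⟩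
  intro a b
  constructor
  · intro hab
    refine ⟨?_, ?_, hab.ne⟩
    · refine (hmemV0 a).mpr ?_
      rw [hdeg_eq]
      exact Finset.card_pos.mpr ⟨b, (hmN a b).mpr hab⟩
    · refine (hmemV0 b).mpr ?_
      rw [hdeg_eq]
      exact Finset.card_pos.mpr ⟨a, (hmN b a).mpr hab.symm⟩
  · rintro ⟨haV, hbV, hne⟩
    have heq : H.neighborFinset a = V0.erase a := by
      refine Finset.eq_of_subset_of_card_le (hnbrV0 a) ?_
      rw [Finset.card_erase_of_mem haV, ← hdeg_eq, hdegall a haV, hn0m]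
    have : b ∈ H.neighborFinset a := by
      rw [heq]
      exact Finset.mem_erase.mpr ⟨hne.symm, hbV⟩
    exact (hmN a b).mp this

end LemC

open Finset in
/-- A `K_s`-saturated graph on `n` vertices with exactly `(s-2)(n-s+2) + C(s-2,2)` edges
is isomorphic to `S_{n,s-2}`. -/
theorem stmt_1 (n s : ℕ) (hs : 2 ≤ s) (hn : s ≤ n) (G : SimpleGraph (Fin n))
    (hG : IsKSat G s)
    (hE : G.edgeSet.ncard = (s - 2) * (n - s + 2) + (s - 2).choose 2) :
    Nonempty (G ≃g sGraph n (s - 2)) := by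
  classical
  obtain ⟨hfree, hsat⟩ := hG
  set m := n - s + 2 with hmdef
  have hm2 : 2 ≤ m := by omega
  set H := Gᶜ with hHdef
  have hHadj : ∀ a b : Fin n, H.Adj a b ↔ a ≠ b ∧ ¬ G.Adj a b := by
    intro a b; rw [hHdef]; exact SimpleGraph.compl_adj G a b
  -- covering property from saturation
  have hcov : ∀ a b : Fin n, H.Adj a b → ∃ C : Finset (Fin n), C.card ≤ m - 2 ∧ a ∉ C ∧ b ∉ C ∧
      (∀ x y, H.Adj x y → s(x,y) ≠ s(a,b) → x ∈ C ∨ y ∈ C) := by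
    intro a b hab
    obtain ⟨hne, hnadj⟩ := (hHadj a b).mp hab
    have hns := hsat a b hne hnadj
    rw [SimpleGraph.CliqueFree] at hns
    push_neg at hns
    obtain ⟨t, ht⟩ := hns
    have hG'adj : ∀ x y : Fin n, (G ⊔ SimpleGraph.fromEdgeSet {s(a, b)}).Adj x y ↔
        G.Adj x y ∨ (s(x,y) = s(a,b) ∧ x ≠ y) := by
      intro x y
      simp [SimpleGraph.sup_adj, SimpleGraph.fromEdgeSet_adj]
    have hat : a ∈ t ∧ b ∈ t := by
      by_contra hat
      refine hfree t ⟨?_, ht.2⟩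
      intro x hx y hy hxy
      rcases (hG'adj x y).mp (ht.1 hx hy hxy) with h | h
      · exact h
      · exfalso
        have hxt : x ∈ t := hx
        have hyt : y ∈ t := hy
        rcases Sym2.eq_iff.mp h.1 with ⟨h1, h2⟩ | ⟨h1, h2⟩
        · exact hat ⟨h1 ▸ hxt, h2 ▸ hyt⟩
        · exact hat ⟨h2 ▸ hyt, h1 ▸ hxt⟩
    refine ⟨tᶜ, ?_, by simp [hat.1], by simp [hat.2], ?_⟩
    · rw [Finset.card_compl, ht.2, Fintype.card_fin]
      omega
    · intro x y hxy hne2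
      by_contra hcon
      push_neg at hcon
      obtain ⟨hx, hy⟩ := hcon
      have hxt : x ∈ t := by simpa using hx
      have hyt : y ∈ t := by simpa using hy
      obtain ⟨hxyne, hxynadj⟩ := (hHadj x y).mp hxy
      have := ht.1 (by exact hxt) (by exact hyt) hxyne
      rcases (hG'adj x y).mp this with h | h
      · exact hxynadj h
      · exact hne2 h.1
  -- cover lower bound from clique-freeness
  have htau : ∀ C : Finset (Fin n), (∀ x y, H.Adj x y → x ∈ C ∨ y ∈ C) → m - 1 ≤ C.card := by
    intro C hC
    by_contra hcon
    push_neg at hcon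
    have hclique : G.IsClique (↑(Cᶜ) : Set (Fin n)) := by
      intro x hx y hy hxy
      by_contra hnadj
      have hH : H.Adj x y := (hHadj x y).mpr ⟨hxy, hnadj⟩
      rcases hC x y hH with h | h
      · exact (Finset.mem_compl.mp hx) h
      · exact (Finset.mem_compl.mp hy) h
    have hcard : s ≤ Cᶜ.card := by
      rw [Finset.card_compl, Fintype.card_fin]
      omega
    obtain ⟨t, hts, htcard⟩ := Finset.exists_subset_card_eq hcard
    exact hfree t ⟨hclique.subset (Finset.coe_subset.mpr hts), htcard⟩
  -- edge count of the complement
  have hEG : G.edgeFinset.card = (s - 2) * m + (s - 2).choose 2 := by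
    rw [← hE]
    rw [Set.ncard_eq_toFinset_card']
    congr 1
  have hsumdeg : ∀ v : Fin n, G.degree v + H.degree v = n - 1 := by
    intro v
    have h1 : H.degree v = Fintype.card (Fin n) - 1 - G.degree v := by
      exact SimpleGraph.degree_compl G v
    have h2 : G.degree v < Fintype.card (Fin n) := G.degree_lt_card_verts v
    rw [Fintype.card_fin] at h1 h2
    omega
  have hEH : H.edgeFinset.card = m.choose 2 := by
    have h1 := SimpleGraph.sum_degrees_eq_twice_card_edges G
    have h2 := SimpleGraph.sum_degrees_eq_twice_card_edges H
    have h3 : ∑ v : Fin n, (G.degree v + H.degree v) = n * (n - 1) := by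
      calc ∑ v : Fin n, (G.degree v + H.degree v)
          = ∑ _v : Fin n, (n - 1) := Finset.sum_congr rfl (fun v _ => hsumdeg v)
        _ = n * (n - 1) := by
            rw [Finset.sum_const, smul_eq_mul, Finset.card_univ, Fintype.card_fin]
    rw [Finset.sum_add_distrib, h1, h2] at h3
    have h4 : n.choose 2 = (s - 2).choose 2 + (s - 2) * m + m.choose 2 := by
      have hn' : n = (s - 2) + m := by omega
      rw [hn']
      exact choose_two_add (s - 2) m
    have h5 : 2 * n.choose 2 = n * (n - 1) := two_mul_choose_two n
    omega
  obtain ⟨K, hKcard, hKadj⟩ := lemC H m hm2 hcov htau hEH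
  have hGadj : ∀ a b : Fin n, G.Adj a b ↔ (a ≠ b ∧ (a ∉ K ∨ b ∉ K)) := by
    intro a b
    constructor
    · intro h
      refine ⟨h.ne, ?_⟩
      by_contra hc
      push_neg at hc
      have : H.Adj a b := (hKadj a b).mpr ⟨hc.1, hc.2, h.ne⟩
      exact ((hHadj a b).mp this).2 h
    · rintro ⟨hne, hc⟩
      by_contra hnadj
      have : H.Adj a b := (hHadj a b).mpr ⟨hne, hnadj⟩
      obtain ⟨h1, h2, _⟩ := (hKadj a b).mp this
      tauto
  set D := Kᶜ with hDdef
  have hDcard : D.card = s - 2 := by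
    rw [hDdef, Finset.card_compl, hKcard, Fintype.card_fin]
    omega
  have hmemD : ∀ a : Fin n, a ∈ D ↔ a ∉ K := by
    intro a; rw [hDdef]; exact Finset.mem_compl
  have hsn : s - 2 ≤ n := by omega
  set T := (Finset.univ : Finset (Fin (s - 2))).map (Fin.castLEEmb hsn) with hTdef
  have hTmem : ∀ i : Fin n, i ∈ T ↔ (i : ℕ) < s - 2 := by
    intro i
    rw [hTdef, Finset.mem_map]
    constructor
    · rintro ⟨j, _, rfl⟩
      exact j.2
    · intro h
      exact ⟨⟨(i : ℕ), h⟩, Finset.mem_univ _, by ext; rfl⟩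
  have hTcard : T.card = s - 2 := by
    simp [hTdef]
  have e1 : {x : Fin n // x ∈ D} ≃ {x : Fin n // x ∈ T} :=
    Finset.equivOfCardEq (by rw [hDcard, hTcard])
  have hTc : Dᶜ.card = Tᶜ.card := by
    have h1 : Dᶜ.card = Fintype.card (Fin n) - D.card := Finset.card_compl D
    have h2 : Tᶜ.card = Fintype.card (Fin n) - T.card := Finset.card_compl T
    rw [h1, h2, hTcard, hDcard]
  have e2 : {x : Fin n // x ∉ D} ≃ {x : Fin n // x ∉ T} :=
    ((Equiv.subtypeEquivRight (fun x => (Finset.mem_compl (s := D)).symm)).trans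
      (Finset.equivOfCardEq hTc)).trans (Equiv.subtypeEquivRight (fun x => Finset.mem_compl))
  set σ := Equiv.subtypeCongr e1 e2 with hσdef
  have hσ : ∀ a : Fin n, (σ a ∈ T) ↔ a ∈ D := by
    intro a
    by_cases h : a ∈ D
    · have hval : σ a = (e1 ⟨a, h⟩ : {x : Fin n // x ∈ T}).1 := by
        rw [hσdef]
        simp [Equiv.subtypeCongr, Equiv.sumCompl_symm_apply_of_pos h]
      rw [hval]
      simpa [h] using (e1 ⟨a, h⟩).2
    · have hval : σ a = (e2 ⟨a, h⟩ : {x : Fin n // x ∉ T}).1 := by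
        rw [hσdef]
        simp [Equiv.subtypeCongr, Equiv.sumCompl_symm_apply_of_neg h]
      rw [hval]
      simp only [h, iff_false]
      exact (e2 ⟨a, h⟩).2
  refine ⟨{ toEquiv := σ, map_rel_iff' := ?_ }⟩
  intro a b
  show ((σ a ≠ σ b) ∧ ((σ a : ℕ) < s - 2 ∨ (σ b : ℕ) < s - 2)) ↔ G.Adj a b
  rw [hGadj a b]
  have h1 : ((σ a : ℕ) < s - 2) ↔ a ∈ D := by rw [← hTmem (σ a)]; exact hσ a
  have h2 : ((σ b : ℕ) < s - 2) ↔ b ∈ D := by rw [← hTmem (σ b)]; exact hσ b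
  have h3 : σ a ≠ σ b ↔ a ≠ b := by
    constructor
    · intro h hab; exact h (hab ▸ rfl)
    · intro h hab; exact h (σ.injective hab)
  rw [h1, h2, h3, hmemD a, hmemD b]
end

section
/- For every integer n ≥ 3, a K_3-saturated graph G on n vertices contains no two disjoint edges (i.e., N(M_2, G) = 0) if and only if G is isomorphic to the star S_{n,1}. In particular, S_{n,1} is the unique K_3-saturated graph on n vertices minimizing the number of copies of M_2. -/
open SimpleGraph

lemma fin_eq_zero_of_lt_one {n : ℕ} [NeZero n] {i : Fin n} (h : (i : ℕ) < 1) : i = 0 :=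
  Fin.ext (by rw [show ((0 : Fin n) : ℕ) = 0 from rfl]; omega)

lemma numM2_zero_iff {n : ℕ} (G : SimpleGraph (Fin n)) :
    numMatchings G 2 = 0 ↔
      ∀ a b c d : Fin n, G.Adj a b → G.Adj c d →
        a ≠ c → a ≠ d → b ≠ c → b ≠ d → False := by
  constructor
  · intro h a b c d hab hcd hac had hbc hbd
    have hne : s(a, b) ≠ s(c, d) := by
      simp [Sym2.eq_iff]
      exact ⟨fun h1 _ => hac h1, fun h1 _ => had h1⟩
    have hmem : ({s(a, b), s(c, d)} : Finset (Sym2 (Fin n))) ∈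
        {M : Finset (Sym2 (Fin n)) | M.card = 2 ∧ (∀ e ∈ M, e ∈ G.edgeSet) ∧
          ∀ e ∈ M, ∀ f ∈ M, e ≠ f → ∀ v, v ∈ e → v ∉ f} := by
      refine ⟨Finset.card_pair hne, ?_, ?_⟩
      · intro e he
        rcases Finset.mem_insert.1 he with rfl | he
        · exact hab
        · rw [Finset.mem_singleton.1 he]; exact hcd
      · intro e he f hf hef v hv
        have he' := Finset.mem_insert.1 he
        have hf' := Finset.mem_insert.1 hf
        simp only [Finset.mem_singleton] at he' hf'
        rcases he' with rfl | rfl <;> rcases hf' with rfl | rfl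
        · exact absurd rfl hef
        · rcases Sym2.mem_iff.1 hv with rfl | rfl
          · simp [Sym2.mem_iff, hac, had]
          · simp [Sym2.mem_iff, hbc, hbd]
        · rcases Sym2.mem_iff.1 hv with rfl | rfl
          · simp [Sym2.mem_iff, hac.symm, hbc.symm]
          · simp [Sym2.mem_iff, had.symm, hbd.symm]
        · exact absurd rfl hef
    have := Set.ncard_eq_zero (Set.toFinite _) |>.1 h
    rw [this] at hmem
    exact hmem
  · intro H
    rw [numMatchings, Set.ncard_eq_zero (Set.toFinite _)]
    by_contra hne
    obtain ⟨M, hM2, hMe, hMd⟩ := Set.nonempty_iff_ne_empty.2 hne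
    obtain ⟨e, f, hef, rfl⟩ := Finset.card_eq_two.1 hM2
    have he : e ∈ G.edgeSet := hMe e (by simp)
    have hf : f ∈ G.edgeSet := hMe f (by simp)
    have hd := hMd e (by simp) f (by simp) hef
    induction e using Sym2.ind with
    | _ a b =>
    induction f using Sym2.ind with
    | _ c d =>
    have hab : G.Adj a b := he
    have hcd : G.Adj c d := hf
    have ha := hd a (by simp)
    have hb := hd b (by simp)
    simp [Sym2.mem_iff] at ha hb
    exact H a b c d hab hcd ha.1 ha.2 hb.1 hb.2

lemma common_nbr {n : ℕ} {G : SimpleGraph (Fin n)} (hG : IsKSat G 3)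
    {u v : Fin n} (huv : u ≠ v) (hna : ¬ G.Adj u v) :
    ∃ z, G.Adj u z ∧ G.Adj v z := by
  have h := hG.2 u v huv hna
  rw [CliqueFree] at h
  push_neg at h
  obtain ⟨t, ht⟩ := h
  classical
  obtain ⟨a, b, c, hab, hac, hbc, rfl⟩ := Finset.card_eq_three.1 ht.2
  have hcl := ht.1
  have hA : ∀ x y : Fin n, x ≠ y → x ∈ ({a, b, c} : Finset (Fin n)) →
      y ∈ ({a, b, c} : Finset (Fin n)) →
      G.Adj x y ∨ (s(x, y) = s(u, v)) := by
    intro x y hxy hx hy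
    have := hcl (by simpa using hx) (by simpa using hy) hxy
    rcases this with h | h
    · exact Or.inl h
    · rw [fromEdgeSet_adj] at h
      exact Or.inr (by simpa using h.1)
  -- at least one pair is the new edge, since G is triangle-free
  have htri : ¬ (G.Adj a b ∧ G.Adj a c ∧ G.Adj b c) := by
    intro ⟨h1, h2, h3⟩
    exact hG.1 {a, b, c} (SimpleGraph.is3Clique_triple_iff.2 ⟨h1, h2, h3⟩)
  have hAB := hA a b hab (by simp) (by simp)
  have hAC := hA a c hac (by simp) (by simp)
  have hBC := hA b c hbc (by simp) (by simp)
  -- helper: if s(x,y) = s(u,v) and G.Adj x z ∧ G.Adj y z then done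
  have fin : ∀ x y z : Fin n, s(x, y) = s(u, v) → G.Adj x z → G.Adj y z →
      ∃ z, G.Adj u z ∧ G.Adj v z := by
    intro x y z hxy h1 h2
    rw [Sym2.eq_iff] at hxy
    rcases hxy with ⟨rfl, rfl⟩ | ⟨rfl, rfl⟩
    · exact ⟨z, h1, h2⟩
    · exact ⟨z, h2, h1⟩
  -- the new edge can coincide with at most one of the three pairs
  rcases hAB with h1 | h1
  · rcases hAC with h2 | h2
    · rcases hBC with h3 | h3
      · exact absurd ⟨h1, h2, h3⟩ htri
      · exact fin b c a h3 h1.symm h2.symm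
    · refine fin a c b h2 h1 ?_
      rcases hBC with h3 | h3
      · exact h3.symm
      · exfalso
        rw [← h2, Sym2.eq_iff] at h3
        rcases h3 with ⟨h4, -⟩ | ⟨h4, -⟩
        · exact hab h4.symm
        · exact hbc h4
  · refine fin a b c h1 ?_ ?_
    · rcases hAC with h2 | h2
      · exact h2
      · exfalso
        rw [← h1, Sym2.eq_iff] at h2
        rcases h2 with ⟨-, h4⟩ | ⟨h4, -⟩
        · exact hbc h4.symm
        · exact hab h4
    · rcases hBC with h3 | h3
      · exact h3
      · exfalso
        rw [← h1, Sym2.eq_iff] at h3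
        rcases h3 with ⟨h4, -⟩ | ⟨-, h4⟩
        · exact hab h4.symm
        · exact hac h4.symm

lemma exists_center {n : ℕ} (hn : 3 ≤ n) {G : SimpleGraph (Fin n)} (hG : IsKSat G 3)
    (hnd : ∀ a b c d : Fin n, G.Adj a b → G.Adj c d →
      a ≠ c → a ≠ d → b ≠ c → b ≠ d → False) :
    ∃ c : Fin n, ∀ a b : Fin n, G.Adj a b ↔ (a ≠ b ∧ (a = c ∨ b = c)) := by
  -- G has an edge
  have hedge : ∃ x y, G.Adj x y := by
    have h01 : (⟨0, by omega⟩ : Fin n) ≠ ⟨1, by omega⟩ := by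
      simp [Fin.ext_iff]
    by_cases h : G.Adj ⟨0, by omega⟩ ⟨1, by omega⟩
    · exact ⟨_, _, h⟩
    · obtain ⟨z, hz, _⟩ := common_nbr hG h01 h
      exact ⟨_, _, hz⟩
  obtain ⟨x, y, hxy⟩ := hedge
  have hxy' : x ≠ y := hxy.ne
  -- every other vertex is adjacent to x or y
  have hcover : ∀ w, w ≠ x → w ≠ y → G.Adj x w ∨ G.Adj y w := by
    intro w hwx hwy
    by_contra h
    push_neg at h
    obtain ⟨hx, hy⟩ := h
    obtain ⟨z, hzx', hzw⟩ := common_nbr hG (Ne.symm hwx) hx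
    have hzx : z ≠ x := hzx'.ne'
    have hzy : z ≠ y := by
      rintro rfl
      exact hy hzw.symm
    exact hnd w z x y hzw hxy hwx hwy hzx hzy
  -- no vertex adjacent to both x and y
  have hboth : ∀ w, ¬ (G.Adj x w ∧ G.Adj y w) := by
    intro w ⟨h1, h2⟩
    exact hG.1 {x, y, w} (SimpleGraph.is3Clique_triple_iff.2 ⟨hxy, h1, h2⟩)
  -- get a universal center
  have hcenter : ∃ c, ∀ w, w ≠ c → G.Adj c w := by
    by_cases hB : ∃ w, w ≠ x ∧ w ≠ y ∧ G.Adj y w ∧ ¬ G.Adj x w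
    · obtain ⟨w0, hw0x, hw0y, hw0adj, hw0na⟩ := hB
      refine ⟨y, fun w hwy => ?_⟩
      by_cases hwx : w = x
      · subst hwx; exact hxy.symm
      · rcases hcover w hwx hwy with h | h
        · -- w adj x, not (necessarily) y; if not adj y, contradiction with hnd
          by_contra hna
          have hww0 : w ≠ w0 := by
            rintro rfl
            exact hna hw0adj
          exact hnd w x w0 y h.symm hw0adj.symm hww0 hwy (Ne.symm hw0x) hxy'
        · exact h
    · push_neg at hB
      refine ⟨x, fun w hwx => ?_⟩
      by_cases hwy : w = y
      · subst hwy; exact hxy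
      · rcases hcover w hwx hwy with h | h
        · exact h
        · exact hB w hwx hwy h
  obtain ⟨c, hc⟩ := hcenter
  refine ⟨c, fun a b => ⟨fun hab => ⟨hab.ne, ?_⟩, fun ⟨hab, h⟩ => ?_⟩⟩
  · by_contra h
    push_neg at h
    obtain ⟨hac, hbc⟩ := h
    exact hG.1 {c, a, b} (SimpleGraph.is3Clique_triple_iff.2
      ⟨hc a hac, hc b hbc, hab⟩)
  · rcases h with rfl | rfl
    · exact hc b (Ne.symm hab)
    · exact (hc a hab).symm

lemma star_no_disjoint {n : ℕ} (hn : 3 ≤ n) :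
    ∀ a b c d : Fin n, (sGraph n 1).Adj a b → (sGraph n 1).Adj c d →
      a ≠ c → a ≠ d → b ≠ c → b ≠ d → False := by
  haveI : NeZero n := ⟨by omega⟩
  intro a b c d hab hcd hac had hbc hbd
  have z1 : a = 0 ∨ b = 0 := by
    rcases hab.2 with h | h
    · left; exact fin_eq_zero_of_lt_one h
    · right; exact fin_eq_zero_of_lt_one h
  have z2 : c = 0 ∨ d = 0 := by
    rcases hcd.2 with h | h
    · left; exact fin_eq_zero_of_lt_one h
    · right; exact fin_eq_zero_of_lt_one h
  rcases z1 with rfl | rfl <;> rcases z2 with h | h <;> simp_all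

lemma star_sat {n : ℕ} (hn : 3 ≤ n) : IsKSat (sGraph n 1) 3 := by
  haveI : NeZero n := ⟨by omega⟩
  classical
  constructor
  · intro t ht
    obtain ⟨a, b, c, hab, hac, hbc, rfl⟩ := Finset.card_eq_three.1 ht.2
    obtain ⟨h1, h2, h3⟩ := SimpleGraph.is3Clique_triple_iff.1 ht
    have z1 : a = 0 ∨ b = 0 := by
      rcases h1.2 with h | h
      · left; exact fin_eq_zero_of_lt_one h
      · right; exact fin_eq_zero_of_lt_one h
    have z2 : a = 0 ∨ c = 0 := by
      rcases h2.2 with h | h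
      · left; exact fin_eq_zero_of_lt_one h
      · right; exact fin_eq_zero_of_lt_one h
    have z3 : b = 0 ∨ c = 0 := by
      rcases h3.2 with h | h
      · left; exact fin_eq_zero_of_lt_one h
      · right; exact fin_eq_zero_of_lt_one h
    rcases z1 with rfl | rfl <;> rcases z2 with h | h <;> rcases z3 with h' | h' <;> simp_all
  · intro u v huv hna hcf
    have hu0 : u ≠ 0 := by
      rintro rfl
      exact hna ⟨huv, Or.inl (by simp)⟩
    have hv0 : v ≠ 0 := by
      rintro rfl
      exact hna ⟨huv, Or.inr (by simp)⟩
    refine hcf {0, u, v} (SimpleGraph.is3Clique_triple_iff.2 ⟨?_, ?_, ?_⟩)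
    · exact Or.inl ⟨Ne.symm hu0, Or.inl (by simp)⟩
    · exact Or.inl ⟨Ne.symm hv0, Or.inl (by simp)⟩
    · exact Or.inr (by rw [fromEdgeSet_adj]; exact ⟨by simp, huv⟩)

lemma satM_eq_zero {n : ℕ} (hn : 3 ≤ n) : satM n 2 3 = 0 := by
  rw [satM, Nat.sInf_eq_zero]
  left
  exact ⟨sGraph n 1, star_sat hn, (numM2_zero_iff _).2 (star_no_disjoint hn)⟩

/-- For `n ≥ 3`, a `K_3`-saturated graph on `n` vertices has no two disjoint edges iff it
is isomorphic to the star `S_{n,1}`; in particular `S_{n,1}` is the unique `K_3`-saturated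
graph on `n` vertices minimizing the number of copies of `M_2`. -/
theorem stmt_6 (n : ℕ) (hn : 3 ≤ n) (G : SimpleGraph (Fin n)) (hG : IsKSat G 3) :
    (numMatchings G 2 = 0 ↔ Nonempty (G ≃g sGraph n 1)) ∧
    (numMatchings G 2 = satM n 2 3 → Nonempty (G ≃g sGraph n 1)) := by
  haveI : NeZero n := ⟨by omega⟩
  classical
  have main : numMatchings G 2 = 0 ↔ Nonempty (G ≃g sGraph n 1) := by
    constructor
    · intro h
      obtain ⟨c, hc⟩ := exists_center hn hG ((numM2_zero_iff G).1 h)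
      have h0 : ∀ a : Fin n, Equiv.swap c 0 a = 0 ↔ a = c := fun a =>
        ⟨fun h => (Equiv.swap c 0).injective
            (by rw [h, Equiv.swap_apply_left]),
         fun h => by rw [h, Equiv.swap_apply_left]⟩
      refine ⟨⟨Equiv.swap c 0, ?_⟩⟩
      intro a b
      show ((Equiv.swap c 0) a ≠ (Equiv.swap c 0) b ∧
          (((Equiv.swap c 0) a : ℕ) < 1 ∨ ((Equiv.swap c 0) b : ℕ) < 1)) ↔ G.Adj a b
      rw [hc a b]
      constructor
      · rintro ⟨h1, h2⟩
        refine ⟨fun h => h1 (by rw [h]), ?_⟩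
        rcases h2 with h2 | h2
        · left; exact (h0 a).1 (fin_eq_zero_of_lt_one h2)
        · right; exact (h0 b).1 (fin_eq_zero_of_lt_one h2)
      · rintro ⟨h1, h2⟩
        refine ⟨fun h => h1 ((Equiv.swap c 0).injective h), ?_⟩
        rcases h2 with rfl | rfl
        · left; rw [Equiv.swap_apply_left]; simp
        · right; rw [Equiv.swap_apply_left]; simp
    · intro ⟨φ⟩
      rw [numM2_zero_iff]
      intro a b c d hab hcd hac had hbc hbd
      refine star_no_disjoint hn (φ a) (φ b) (φ c) (φ d) ?_ ?_ ?_ ?_ ?_ ?_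
      · exact φ.map_rel_iff.2 hab
      · exact φ.map_rel_iff.2 hcd
      all_goals simp [φ.toEquiv.injective.ne_iff]
      exacts [hac, had, hbc, hbd]
  refine ⟨main, fun h => main.1 ?_⟩
  rw [h, satM_eq_zero hn]
end

section
/- For all integers n, s, k with n ≥ s ≥ 3 and k ≥ s−1, the graph S_{n,s−2} contains no matching of size k; consequently sat(n, M_k, K_s) = 0. -/
lemma filter_lt_card_le {n : ℕ} (m : ℕ) (t : Finset (Fin n)) :
    (t.filter fun i : Fin n => (i : ℕ) < m).card ≤ m := by
  classical
  have := Finset.card_le_card_of_injOn (fun i : Fin n => (i : ℕ))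
    (s := t.filter fun i : Fin n => (i : ℕ) < m) (t := Finset.range m)
    (by intro a ha; simp at ha ⊢; exact ha.2)
    (by intro a _ b _ h; exact Fin.val_injective h)
  simpa using this

lemma filter_lt_card_eq {n : ℕ} (m : ℕ) (hmn : m ≤ n) :
    ((Finset.univ : Finset (Fin n)).filter fun i : Fin n => (i : ℕ) < m).card = m := by
  classical
  have : ((Finset.univ : Finset (Fin n)).filter fun i : Fin n => (i : ℕ) < m)
      = (Finset.univ : Finset (Fin m)).image (Fin.castLE hmn) := by
    ext i
    simp only [Finset.mem_filter, Finset.mem_univ, true_and, Finset.mem_image]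
    constructor
    · intro hi
      refine ⟨⟨(i : ℕ), hi⟩, ?_⟩
      ext; simp [Fin.castLE]
    · rintro ⟨j, -, rfl⟩; exact j.isLt
  rw [this, Finset.card_image_of_injective _ (Fin.castLE_injective hmn)]
  simp

lemma no_big_matching (n s k : ℕ) (hs : 3 ≤ s) (hk : s - 1 ≤ k)
    (M : Finset (Sym2 (Fin n)))
    (hcard : M.card = k)
    (hedge : ∀ e ∈ M, e ∈ (sGraph n (s-2)).edgeSet)
    (hdisj : ∀ e ∈ M, ∀ f ∈ M, e ≠ f → ∀ v, v ∈ e → v ∉ f) : False := by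
  classical
  have hex : ∀ e ∈ M, ∃ v : Fin n, v ∈ e ∧ (v : ℕ) < s - 2 := by
    intro e he
    have h := hedge e he
    induction e using Sym2.ind with
    | _ a b =>
      rw [SimpleGraph.mem_edgeSet] at h
      rcases h.2 with h' | h'
      · exact ⟨a, Sym2.mem_mk_left a b, h'⟩
      · exact ⟨b, Sym2.mem_mk_right a b, h'⟩
  obtain ⟨e0, he0⟩ : M.Nonempty := Finset.card_pos.mp (by omega)
  obtain ⟨v0, -, -⟩ := hex e0 he0
  have : Inhabited (Fin n) := ⟨v0⟩
  choose! g hg1 hg2 using hex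
  have hle : M.card ≤ ((Finset.univ : Finset (Fin n)).filter fun i : Fin n => (i : ℕ) < s - 2).card := by
    apply Finset.card_le_card_of_injOn g
    · intro e he; simp [hg2 e he]
    · intro e he f hf hef
      by_contra hne
      exact hdisj e he f hf hne (g e) (hg1 e he) (hef ▸ hg1 f hf)
  have := filter_lt_card_le (s-2) (Finset.univ : Finset (Fin n))
  omega

lemma sGraph_cliqueFree (n s : ℕ) (hs : 3 ≤ s) : (sGraph n (s-2)).CliqueFree s := by
  classical
  intro t ht
  have h1 : (t.filter fun i : Fin n => (i : ℕ) < s - 2).card ≤ s - 2 := filter_lt_card_le _ _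
  have h2 : (t.filter fun i : Fin n => ¬ (i : ℕ) < s - 2).card ≤ 1 := by
    rw [Finset.card_le_one]
    intro a ha b hb
    simp only [Finset.mem_filter] at ha hb
    by_contra hab
    have := ht.1 (Finset.mem_coe.mpr ha.1) (Finset.mem_coe.mpr hb.1) hab
    rcases this.2 with h | h
    · exact ha.2 h
    · exact hb.2 h
  have h3 := Finset.card_filter_add_card_filter_not
    (s := t) (p := fun i : Fin n => (i : ℕ) < s - 2)
  have := ht.2
  omega

lemma sGraph_sat (n s : ℕ) (hs : 3 ≤ s) (hn : s ≤ n) :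
    ∀ u v : Fin n, u ≠ v → ¬ (sGraph n (s-2)).Adj u v →
      ¬ ((sGraph n (s-2)) ⊔ SimpleGraph.fromEdgeSet {s(u, v)}).CliqueFree s := by
  classical
  intro u v huv hadj hcf
  have hu : ¬ (u : ℕ) < s - 2 ∧ ¬ (v : ℕ) < s - 2 := by
    by_contra h
    exact hadj ⟨huv, by tauto⟩
  set T : Finset (Fin n) := ((Finset.univ : Finset (Fin n)).filter fun i : Fin n => (i : ℕ) < s - 2) ∪ {u, v} with hT
  have hdisj : Disjoint ((Finset.univ : Finset (Fin n)).filter fun i : Fin n => (i : ℕ) < s - 2) ({u, v} : Finset (Fin n)) := by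
    rw [Finset.disjoint_right]
    intro a ha
    simp only [Finset.mem_insert, Finset.mem_singleton] at ha
    rcases ha with rfl | rfl <;> simp [hu.1, hu.2]
  have hcardT : T.card = s := by
    rw [hT, Finset.card_union_of_disjoint hdisj, filter_lt_card_eq (s-2) (by omega),
      Finset.card_pair huv]
    omega
  refine hcf T ⟨?_, hcardT⟩
  intro a ha b hb hab
  simp only [hT, Finset.coe_union, Set.mem_union, Finset.coe_filter, Set.mem_setOf_eq,
    Finset.coe_insert, Set.mem_insert_iff, Finset.coe_singleton, Set.mem_singleton_iff,
    Finset.mem_univ, true_and] at ha hb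
  rcases ha with ha | ha
  · exact Or.inl ⟨hab, Or.inl ha⟩
  · rcases hb with hb | hb
    · exact Or.inl ⟨hab, Or.inr hb⟩
    · refine Or.inr ?_
      simp only [SimpleGraph.fromEdgeSet_adj, Set.mem_singleton_iff]
      refine ⟨?_, hab⟩
      rcases ha with rfl | rfl <;> rcases hb with rfl | rfl
      · exact absurd rfl hab
      · rfl
      · exact Sym2.eq_swap
      · exact absurd rfl hab


/-- For `n ≥ s ≥ 3` and `k ≥ s - 1`, the graph `S_{n,s-2}` has no matching of size `k`;
consequently `sat(n, M_k, K_s) = 0`. -/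
theorem stmt_7 (n s k : ℕ) (hs : 3 ≤ s) (hn : s ≤ n) (hk : s - 1 ≤ k) :
    numMatchings (sGraph n (s - 2)) k = 0 ∧ satM n k s = 0 := by
  have hm : numMatchings (sGraph n (s - 2)) k = 0 := by
    have hE : {M : Finset (Sym2 (Fin n)) | M.card = k ∧
        (∀ e ∈ M, e ∈ (sGraph n (s - 2)).edgeSet) ∧
        ∀ e ∈ M, ∀ f ∈ M, e ≠ f → ∀ v, v ∈ e → v ∉ f} = ∅ := by
      ext M
      simp only [Set.mem_setOf_eq, Set.mem_empty_iff_false, iff_false, not_and]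
      intro h1 h2 h3
      exact no_big_matching n s k hs hk M h1 h2 h3
    rw [numMatchings, hE, Set.ncard_empty]
  refine ⟨hm, ?_⟩
  rw [satM, Nat.sInf_eq_zero]
  left
  exact ⟨sGraph n (s-2), ⟨sGraph_cliqueFree n s hs, sGraph_sat n s hs hn⟩, hm⟩
end

section
/- Let s and k be integers with 2 ≤ k ≤ s−2 and let f : ℕ → ℝ be any function with f(n) → ∞ as n → ∞. Then there exist a constant C > 0 and an integer n₀ such that for all n ≥ n₀: if G is a K_s-saturated graph on n vertices with N(M_k, G) = sat(n, M_k, K_s), then G has at most C·n·f(n) edges. -/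
section Aux

noncomputable def efin {n : ℕ} (G : SimpleGraph (Fin n)) : Finset (Sym2 (Fin n)) :=
  (Set.toFinite G.edgeSet).toFinset

lemma mem_efin {n : ℕ} {G : SimpleGraph (Fin n)} {e : Sym2 (Fin n)} :
    e ∈ efin G ↔ e ∈ G.edgeSet := by simp [efin]

open scoped Classical in
noncomputable def mset {n : ℕ} (G : SimpleGraph (Fin n)) (k : ℕ) : Finset (Finset (Sym2 (Fin n))) :=
  Finset.univ.filter (fun M => M.card = k ∧ (∀ e ∈ M, e ∈ G.edgeSet) ∧
    ∀ e ∈ M, ∀ f ∈ M, e ≠ f → ∀ v, v ∈ e → v ∉ f)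

lemma mem_mset {n : ℕ} {G : SimpleGraph (Fin n)} {k : ℕ} {M : Finset (Sym2 (Fin n))} :
    M ∈ mset G k ↔ M.card = k ∧ (∀ e ∈ M, e ∈ G.edgeSet) ∧
      ∀ e ∈ M, ∀ f ∈ M, e ≠ f → ∀ v, v ∈ e → v ∉ f := by
  classical
  simp [mset]

lemma numMatchings_eq_mset {n : ℕ} (G : SimpleGraph (Fin n)) (k : ℕ) :
    numMatchings G k = (mset G k).card := by
  rw [numMatchings, ← Set.ncard_coe_finset]
  congr 1
  ext M
  simp [mem_mset]

/-- edges containing a fixed vertex: at most n -/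
lemma card_incid_le {n : ℕ} (G : SimpleGraph (Fin n)) (v : Fin n) :
    ((efin G).filter (fun e => v ∈ e)).card ≤ n := by
  classical
  set fv : Sym2 (Fin n) → Fin n := fun e => if h : v ∈ e then Sym2.Mem.other h else v with hfv
  have h : ∀ e ∈ (efin G).filter (fun e => v ∈ e), s(v, fv e) = e := by
    intro e he
    rw [Finset.mem_filter] at he
    have hv : v ∈ e := he.2
    simp only [hfv, dif_pos hv]
    exact Sym2.other_spec hv
  calc ((efin G).filter (fun e => v ∈ e)).card
      ≤ (Finset.univ : Finset (Fin n)).card := by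
        apply Finset.card_le_card_of_injOn fv
        · intro e _; exact Finset.mem_univ _
        · intro e1 h1 e2 h2 hfe
          have := h e1 h1
          have h2' := h e2 h2
          rw [← h e1 h1, ← h e2 h2, hfe]
    _ = n := by simp


open scoped Classical in
/-- fiber bound: edges disjoint from a k-set of edges number at least m - 2kn -/
lemma card_disj_ge {n : ℕ} (G : SimpleGraph (Fin n)) (k : ℕ) (M : Finset (Sym2 (Fin n)))
    (hM : M.card = k) :
    (efin G).card - 2 * k * n ≤
      ((efin G).filter (fun e => ∀ f ∈ M, ∀ v, v ∈ e → v ∉ f)).card := by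
  classical
  have hsplit := Finset.card_filter_add_card_filter_not (s := efin G)
    (fun e => ∀ f ∈ M, ∀ v, v ∈ e → v ∉ f)
  -- bound the bad part
  set VM : Finset (Fin n) := M.biUnion (fun f => {(Quot.out f).1, (Quot.out f).2}) with hVM
  have hVMcard : VM.card ≤ 2 * k := by
    calc VM.card ≤ ∑ f ∈ M, ({(Quot.out f).1, (Quot.out f).2} : Finset (Fin n)).card :=
          Finset.card_biUnion_le
    _ ≤ ∑ f ∈ M, 2 := Finset.sum_le_sum (fun f _ => Finset.card_insert_le _ _ |>.trans (by simp))
    _ = 2 * k := by rw [Finset.sum_const, hM]; ring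
  have hbad : ((efin G).filter (fun e => ¬ (∀ f ∈ M, ∀ v, v ∈ e → v ∉ f))).card ≤ 2 * k * n := by
    have hsub : (efin G).filter (fun e => ¬ (∀ f ∈ M, ∀ v, v ∈ e → v ∉ f)) ⊆
        VM.biUnion (fun v => (efin G).filter (fun e => v ∈ e)) := by
      intro e he
      rw [Finset.mem_filter] at he
      simp only [not_forall] at he
      obtain ⟨f, hf, v, hv, hvf⟩ := he.2
      rw [not_not] at hvf
      refine Finset.mem_biUnion.2 ⟨v, ?_, Finset.mem_filter.2 ⟨he.1, hv⟩⟩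
      refine Finset.mem_biUnion.2 ⟨f, hf, ?_⟩
      have : s((Quot.out f).1, (Quot.out f).2) = f := by
        conv_rhs => rw [← Quot.out_eq f]
      rw [← this, Sym2.mem_iff] at hvf
      simp only [Finset.mem_insert, Finset.mem_singleton]
      tauto
    calc ((efin G).filter (fun e => ¬ (∀ f ∈ M, ∀ v, v ∈ e → v ∉ f))).card
        ≤ (VM.biUnion (fun v => (efin G).filter (fun e => v ∈ e))).card :=
          Finset.card_le_card hsub
      _ ≤ ∑ v ∈ VM, ((efin G).filter (fun e => v ∈ e)).card := Finset.card_biUnion_le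
      _ ≤ ∑ v ∈ VM, n := Finset.sum_le_sum (fun v _ => card_incid_le G v)
      _ = VM.card * n := by rw [Finset.sum_const]; ring
      _ ≤ 2 * k * n := Nat.mul_le_mul_right n hVMcard
  omega


open scoped Classical in
lemma step {n : ℕ} (G : SimpleGraph (Fin n)) (k : ℕ) :
    (mset G k).card * ((efin G).card - 2 * k * n) ≤ (k + 1) * (mset G (k + 1)).card := by
  classical
  set D : Finset (Sym2 (Fin n)) → Finset (Sym2 (Fin n)) :=
    fun M => (efin G).filter (fun e => ∀ f ∈ M, ∀ v, v ∈ e → v ∉ f) with hD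
  have hnotmem : ∀ M e, e ∈ D M → e ∉ M := by
    intro M e he hmem
    simp only [hD, Finset.mem_filter] at he
    exact he.2 e hmem _ (Sym2.out_fst_mem e) (Sym2.out_fst_mem e)
  have h1 : (mset G k).card * ((efin G).card - 2 * k * n) ≤
      ((mset G k).sigma (fun M => D M)).card := by
    rw [Finset.card_sigma]
    calc (mset G k).card * ((efin G).card - 2 * k * n)
        = ∑ _M ∈ mset G k, ((efin G).card - 2 * k * n) := by rw [Finset.sum_const]; ring
      _ ≤ ∑ M ∈ mset G k, (D M).card :=
          Finset.sum_le_sum (fun M hM => card_disj_ge G k M (mem_mset.1 hM).1)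
  have h2 : ((mset G k).sigma (fun M => D M)).card ≤
      ((mset G (k+1)).sigma (fun N => N)).card := by
    apply Finset.card_le_card_of_injOn (fun p => ⟨insert p.2 p.1, p.2⟩)
    · rintro ⟨M, e⟩ hp
      rw [Finset.mem_coe, Finset.mem_sigma] at hp
      obtain ⟨hM, he⟩ := hp
      rw [mem_mset] at hM
      have heM : e ∉ M := hnotmem M e he
      simp only [hD, Finset.mem_filter] at he
      have heE : e ∈ G.edgeSet := mem_efin.1 he.1
      rw [Finset.mem_coe, Finset.mem_sigma]
      refine ⟨?_, Finset.mem_insert_self _ _⟩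
      rw [mem_mset]
      refine ⟨by rw [Finset.card_insert_of_notMem heM, hM.1], ?_, ?_⟩
      · intro g hg
        rcases Finset.mem_insert.1 hg with rfl | hg
        · exact heE
        · exact hM.2.1 g hg
      · intro g hg g' hg' hne v hv
        rcases Finset.mem_insert.1 hg with rfl | hg <;>
          rcases Finset.mem_insert.1 hg' with rfl | hg'
        · exact absurd rfl hne
        · exact he.2 g' hg' v hv
        · intro hv'
          exact he.2 g hg v hv' hv
        · exact hM.2.2 g hg g' hg' hne v hv
    · rintro ⟨M1, e1⟩ h1' ⟨M2, e2⟩ h2' heq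
      rw [Finset.mem_coe, Finset.mem_sigma] at h1' h2'
      have hm1 : e1 ∉ M1 := hnotmem M1 e1 h1'.2
      have hm2 : e2 ∉ M2 := hnotmem M2 e2 h2'.2
      simp only [Sigma.mk.inj_iff] at heq
      obtain ⟨hN, he⟩ := heq
      have hee : e1 = e2 := eq_of_heq he
      subst hee
      have hMM : M1 = M2 := by
        have := congrArg (fun (t : Finset (Sym2 (Fin n))) => t.erase e1) hN
        simpa [Finset.erase_insert hm1, Finset.erase_insert hm2] using this
      subst hMM
      rfl
  have h3 : ((mset G (k+1)).sigma (fun N => N)).card = (k+1) * (mset G (k+1)).card := by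
    rw [Finset.card_sigma]
    rw [Finset.sum_congr rfl (fun N hN => (mem_mset.1 hN).1)]
    rw [Finset.sum_const, smul_eq_mul, Nat.mul_comm]
  omega


lemma lower {n : ℕ} (G : SimpleGraph (Fin n)) (k : ℕ) :
    ((efin G).card - 2 * k * n) ^ k ≤ k.factorial * (mset G k).card := by
  induction k with
  | zero =>
    simp only [pow_zero, Nat.factorial_zero, one_mul]
    rw [Nat.one_le_iff_ne_zero, ← Nat.pos_iff_ne_zero, Finset.card_pos]
    exact ⟨∅, mem_mset.2 ⟨rfl, by simp, by simp⟩⟩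
  | succ j ih =>
    have hmono : (efin G).card - 2 * (j+1) * n ≤ (efin G).card - 2 * j * n := by
      apply Nat.sub_le_sub_left
      nlinarith
    calc ((efin G).card - 2 * (j+1) * n) ^ (j+1)
        = ((efin G).card - 2 * (j+1) * n) ^ j * ((efin G).card - 2 * (j+1) * n) := by ring
      _ ≤ ((efin G).card - 2 * j * n) ^ j * ((efin G).card - 2 * j * n) :=
          Nat.mul_le_mul (Nat.pow_le_pow_left hmono j) hmono
      _ ≤ (j.factorial * (mset G j).card) * ((efin G).card - 2 * j * n) :=
          Nat.mul_le_mul_right _ ih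
      _ = j.factorial * ((mset G j).card * ((efin G).card - 2 * j * n)) := by ring
      _ ≤ j.factorial * ((j + 1) * (mset G (j+1)).card) :=
          Nat.mul_le_mul_left _ (step G j)
      _ = (j+1).factorial * (mset G (j+1)).card := by
          rw [Nat.factorial_succ]; ring

lemma upper {n : ℕ} (G : SimpleGraph (Fin n)) (k : ℕ) :
    (mset G k).card ≤ (efin G).card ^ k := by
  classical
  calc (mset G k).card ≤ ((efin G).powersetCard k).card := by
        apply Finset.card_le_card
        intro M hM
        rw [mem_mset] at hM
        rw [Finset.mem_powersetCard]
        exact ⟨fun e he => mem_efin.2 (hM.2.1 e he), hM.1⟩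
    _ = (efin G).card.choose k := Finset.card_powersetCard _ _
    _ ≤ (efin G).card ^ k := Nat.choose_le_pow _ _


lemma card_filter_lt_le (n t : ℕ) :
    ((Finset.univ : Finset (Fin n)).filter (fun j : Fin n => (j : ℕ) < t)).card ≤ t := by
  classical
  calc _ ≤ (Finset.range t).card := by
        refine Finset.card_le_card_of_injOn (fun j => (j : ℕ)) ?_ ?_
        · intro j hj
          rw [Finset.mem_coe, Finset.mem_filter] at hj
          exact Finset.mem_range.2 hj.2
        · intro a _ b _ h
          dsimp only at h
          exact Fin.val_injective h
    _ = t := Finset.card_range t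

lemma card_filter_lt_eq (n t : ℕ) (h : t ≤ n) :
    ((Finset.univ : Finset (Fin n)).filter (fun j : Fin n => (j : ℕ) < t)).card = t := by
  classical
  rcases Nat.eq_zero_or_pos n with h0 | h0
  · subst h0
    have ht : t = 0 := Nat.le_zero.1 h
    subst ht
    simp
  refine le_antisymm (card_filter_lt_le n t) ?_
  calc t = (Finset.range t).card := (Finset.card_range t).symm
    _ ≤ _ := by
        refine Finset.card_le_card_of_injOn
          (fun i => (⟨i % n, Nat.mod_lt _ h0⟩ : Fin n)) ?_ ?_
        · intro i hi
          rw [Finset.mem_coe, Finset.mem_range] at hi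
          rw [Finset.mem_coe, Finset.mem_filter]
          refine ⟨Finset.mem_univ _, ?_⟩
          simp only
          rw [Nat.mod_eq_of_lt (by omega)]
          omega
        · intro a ha b hb hab
          rw [Finset.mem_coe, Finset.mem_range] at ha hb
          have := congrArg Fin.val hab
          simp only at this
          rw [Nat.mod_eq_of_lt (by omega), Nat.mod_eq_of_lt (by omega)] at this
          exact this

lemma sGraph_edge_bound (n t : ℕ) :
    ∀ (F : Finset (Sym2 (Fin n))), (∀ e, e ∈ F ↔ e ∈ (sGraph n t).edgeSet) →
      F.card ≤ t * n := by
  classical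
  intro F hF
  have hFeq : F = (sGraph n t).edgeFinset := by
    ext e; rw [hF, SimpleGraph.mem_edgeFinset]
  have hsum := SimpleGraph.sum_degrees_eq_twice_card_edges (sGraph n t)
  have hdeglt : ∀ v : Fin n, (v : ℕ) < t → (sGraph n t).degree v ≤ n := by
    intro v _
    calc (sGraph n t).degree v = ((sGraph n t).neighborFinset v).card := rfl
      _ ≤ (Finset.univ : Finset (Fin n)).card := Finset.card_le_card (Finset.subset_univ _)
      _ = n := by simp
  have hdegge : ∀ v : Fin n, ¬ (v : ℕ) < t → (sGraph n t).degree v ≤ t := by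
    intro v hv
    calc (sGraph n t).degree v = ((sGraph n t).neighborFinset v).card := rfl
      _ ≤ ((Finset.univ : Finset (Fin n)).filter (fun j : Fin n => (j : ℕ) < t)).card := by
          apply Finset.card_le_card
          intro j hj
          rw [SimpleGraph.mem_neighborFinset] at hj
          obtain ⟨hne, hor⟩ := hj
          rw [Finset.mem_filter]
          exact ⟨Finset.mem_univ _, by tauto⟩
      _ ≤ t := card_filter_lt_le n t
  have hsumle : ∑ v : Fin n, (sGraph n t).degree v ≤ 2 * (t * n) := by
    classical
    rw [← Finset.sum_filter_add_sum_filter_not Finset.univ (fun v : Fin n => (v : ℕ) < t)]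
    have h1 : ∑ v ∈ Finset.univ.filter (fun v : Fin n => (v : ℕ) < t), (sGraph n t).degree v
        ≤ t * n := by
      calc _ ≤ ∑ v ∈ Finset.univ.filter (fun v : Fin n => (v : ℕ) < t), n :=
            Finset.sum_le_sum (fun v hv => hdeglt v (Finset.mem_filter.1 hv).2)
        _ = _ * n := Finset.sum_const _
        _ ≤ t * n := Nat.mul_le_mul_right n (card_filter_lt_le n t)
    have h2 : ∑ v ∈ Finset.univ.filter (fun v : Fin n => ¬ (v : ℕ) < t), (sGraph n t).degree v
        ≤ t * n := by
      calc _ ≤ ∑ v ∈ Finset.univ.filter (fun v : Fin n => ¬ (v : ℕ) < t), t :=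
            Finset.sum_le_sum (fun v hv => hdegge v (Finset.mem_filter.1 hv).2)
        _ = _ * t := Finset.sum_const _
        _ ≤ n * t := Nat.mul_le_mul_right t (by
            calc _ ≤ (Finset.univ : Finset (Fin n)).card := Finset.card_le_card (Finset.filter_subset _ _)
              _ = n := by simp)
        _ = t * n := Nat.mul_comm n t
    omega
  rw [hFeq]
  omega

lemma sGraph_cliqueFree_s11 (n t : ℕ) : (sGraph n t).CliqueFree (t + 2) := by
  classical
  intro c hc
  obtain ⟨hclique, hcard⟩ := hc
  have h1 : (c.filter (fun j : Fin n => (j : ℕ) < t)).card ≤ t := by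
    calc _ ≤ ((Finset.univ : Finset (Fin n)).filter (fun j : Fin n => (j : ℕ) < t)).card :=
          Finset.card_le_card (Finset.filter_subset_filter _ (Finset.subset_univ c))
      _ ≤ t := card_filter_lt_le n t
  have h2 : (c.filter (fun j : Fin n => ¬ (j : ℕ) < t)).card ≤ 1 := by
    rw [Finset.card_le_one]
    intro a ha b hb
    rw [Finset.mem_filter] at ha hb
    by_contra hab
    have hadj := hclique ha.1 hb.1 hab
    rcases hadj.2 with h | h
    · exact ha.2 h
    · exact hb.2 h
  have := Finset.card_filter_add_card_filter_not
    (s := c) (fun j : Fin n => (j : ℕ) < t)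
  omega

lemma sGraph_sat_s11 (n t : ℕ) : IsKSat (sGraph n t) (t + 2) := by
  classical
  refine ⟨sGraph_cliqueFree_s11 n t, ?_⟩
  intro u v huv hadj hfree
  have hu : ¬ (u : ℕ) < t := by
    intro h; exact hadj ⟨huv, Or.inl h⟩
  have hv : ¬ (v : ℕ) < t := by
    intro h; exact hadj ⟨huv, Or.inr h⟩
  have htn : t ≤ n := le_of_lt (lt_of_le_of_lt (Nat.not_lt.1 hu) u.isLt)
  set c : Finset (Fin n) := insert u (insert v
    ((Finset.univ : Finset (Fin n)).filter (fun j : Fin n => (j : ℕ) < t))) with hc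
  have hvmem : v ∉ (Finset.univ : Finset (Fin n)).filter (fun j : Fin n => (j : ℕ) < t) := by
    simp [hv]
  have humem : u ∉ insert v
      ((Finset.univ : Finset (Fin n)).filter (fun j : Fin n => (j : ℕ) < t)) := by
    simp [hu, huv]
  have hcard : c.card = t + 2 := by
    rw [hc, Finset.card_insert_of_notMem humem, Finset.card_insert_of_notMem hvmem,
      card_filter_lt_eq n t htn]
  apply hfree c
  constructor
  · intro x hx y hy hxy
    rw [Finset.mem_coe, hc] at hx hy
    simp only [Finset.mem_insert, Finset.mem_filter, Finset.mem_univ, true_and] at hx hy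
    rw [SimpleGraph.sup_adj]
    rcases hx with rfl | rfl | hx
    · rcases hy with rfl | rfl | hy
      · exact absurd rfl hxy
      · right
        rw [SimpleGraph.fromEdgeSet_adj]
        exact ⟨Set.mem_singleton _, hxy⟩
      · exact Or.inl ⟨hxy, Or.inr hy⟩
    · rcases hy with rfl | rfl | hy
      · right
        rw [SimpleGraph.fromEdgeSet_adj]
        refine ⟨?_, hxy⟩
        rw [Sym2.eq_swap]
        exact Set.mem_singleton _
      · exact absurd rfl hxy
      · exact Or.inl ⟨hxy, Or.inr hy⟩
    · exact Or.inl ⟨hxy, Or.inl hx⟩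
  · exact hcard


end Aux

/-- For `2 ≤ k ≤ s - 2` and any `f(n) → ∞`, every extremal `K_s`-saturated graph (one
minimizing the number of copies of `M_k`) on `n` vertices has `O(n·f(n))` edges. -/
theorem stmt_11 (s k : ℕ) (hk : 2 ≤ k) (hks : k ≤ s - 2) (f : ℕ → ℝ)
    (hf : Filter.Tendsto f Filter.atTop Filter.atTop) :
    ∃ C : ℝ, 0 < C ∧ ∃ n₀ : ℕ, ∀ n ≥ n₀, ∀ G : SimpleGraph (Fin n),
      IsKSat G s → numMatchings G k = satM n k s →
      (G.edgeSet.ncard : ℝ) ≤ C * n * f n := by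
  classical
  -- abbreviations
  have hs4 : 4 ≤ s := by omega
  set t := s - 2 with ht
  have hts : t + 2 = s := by omega
  -- the graph sGraph n t is K_s-saturated for every n
  have hsatS : ∀ n : ℕ, IsKSat (sGraph n t) s := by
    intro n
    have := sGraph_sat_s11 n t
    rwa [hts] at this
  -- the linear bound on any extremal graph
  have key : ∀ n : ℕ, ∀ G : SimpleGraph (Fin n),
      IsKSat G s → numMatchings G k = satM n k s →
      (efin G).card ≤ (2 * k + Nat.factorial k * t) * n := by
    intro n G _hG hext
    have hle : satM n k s ≤ numMatchings (sGraph n t) k :=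
      Nat.sInf_le ⟨sGraph n t, hsatS n, rfl⟩
    have hedgeS : (efin (sGraph n t)).card ≤ t * n :=
      sGraph_edge_bound n t (efin (sGraph n t)) (fun e => mem_efin)
    have hupS : numMatchings (sGraph n t) k ≤ (t * n) ^ k := by
      rw [numMatchings_eq_mset]
      calc (mset (sGraph n t) k).card ≤ (efin (sGraph n t)).card ^ k := upper _ k
        _ ≤ (t * n) ^ k := Nat.pow_le_pow_left hedgeS k
    have hlow : ((efin G).card - 2 * k * n) ^ k ≤ Nat.factorial k * (t * n) ^ k := by
      calc ((efin G).card - 2 * k * n) ^ k ≤ Nat.factorial k * (mset G k).card := lower G k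
        _ = Nat.factorial k * numMatchings G k := by rw [numMatchings_eq_mset]
        _ = Nat.factorial k * satM n k s := by rw [hext]
        _ ≤ Nat.factorial k * numMatchings (sGraph n t) k := Nat.mul_le_mul_left _ hle
        _ ≤ Nat.factorial k * (t * n) ^ k := Nat.mul_le_mul_left _ hupS
    have hlow2 : ((efin G).card - 2 * k * n) ^ k ≤ (Nat.factorial k * (t * n)) ^ k := by
      calc ((efin G).card - 2 * k * n) ^ k ≤ Nat.factorial k * (t * n) ^ k := hlow
        _ ≤ (Nat.factorial k) ^ k * (t * n) ^ k :=
            Nat.mul_le_mul_right _ (Nat.le_self_pow (by omega) _)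
        _ = (Nat.factorial k * (t * n)) ^ k := (mul_pow _ _ _).symm
    have hsub : (efin G).card - 2 * k * n ≤ Nat.factorial k * (t * n) :=
      (Nat.pow_le_pow_iff_left (by omega)).1 hlow2
    have : (efin G).card ≤ 2 * k * n + Nat.factorial k * (t * n) := by omega
    calc (efin G).card ≤ 2 * k * n + Nat.factorial k * (t * n) := this
      _ = (2 * k + Nat.factorial k * t) * n := by ring
  -- choose the constant and threshold
  obtain ⟨n₀, hn₀⟩ := Filter.eventually_atTop.1 (hf.eventually_ge_atTop 1)
  refine ⟨(2 * k + Nat.factorial k * t : ℕ) + 1, by positivity, n₀, ?_⟩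
  intro n hn G hG hext
  have hcard : G.edgeSet.ncard = (efin G).card := by
    rw [Set.ncard_eq_toFinset_card G.edgeSet (Set.toFinite _)]
    rfl
  have hkey := key n G hG hext
  have hf1 : 1 ≤ f n := hn₀ n hn
  have h1 : (G.edgeSet.ncard : ℝ) ≤ ((2 * k + Nat.factorial k * t : ℕ) : ℝ) * n := by
    rw [hcard]
    exact_mod_cast hkey
  calc (G.edgeSet.ncard : ℝ)
      ≤ ((2 * k + Nat.factorial k * t : ℕ) : ℝ) * n := h1
    _ ≤ (((2 * k + Nat.factorial k * t : ℕ) : ℝ) + 1) * n := by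
        have : (0:ℝ) ≤ n := Nat.cast_nonneg n
        nlinarith
    _ ≤ (((2 * k + Nat.factorial k * t : ℕ) : ℝ) + 1) * n * f n := by
        refine le_mul_of_one_le_right ?_ hf1
        positivity
end

section
/- Let s and k be integers with 2 ≤ k ≤ s−2, let G be a K_s-saturated graph, let v be a vertex of G with degree d_G(v) ≥ 2ks, and let I be an independent set of G of size k−1 with v ∉ I. Then the number of matchings of size k in G whose vertex set contains I ∪ {v} is at least d_G(v)/2. -/

lemma deg_lb {V : Type*} [Fintype V] [DecidableEq V] {s : ℕ} {G : SimpleGraph V}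
    [DecidableRel G.Adj] (hG : IsKSat G s) {a w : V} (haw : a ≠ w) (hna : ¬ G.Adj a w) :
    s - 2 ≤ G.degree a := by
  obtain ⟨hfree, hsat⟩ := hG
  have h := hsat a w haw hna
  rw [SimpleGraph.CliqueFree] at h
  push_neg at h
  obtain ⟨t, ht⟩ := h
  have hcard : t.card = s := ht.2
  have hclq := ht.1
  -- t is not a clique in G
  have hnotG : ¬ G.IsClique (t : Set V) := by
    intro hc
    exact hfree t ⟨hc, hcard⟩
  rw [SimpleGraph.isClique_iff, Set.Pairwise] at hnotG
  push_neg at hnotG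
  obtain ⟨x, hx, y, hy, hxy, hnxy⟩ := hnotG
  have hadj : (G ⊔ SimpleGraph.fromEdgeSet {s(a, w)}).Adj x y := hclq hx hy hxy
  rw [SimpleGraph.sup_adj, SimpleGraph.fromEdgeSet_adj] at hadj
  have hmem : a ∈ t ∧ w ∈ t := by
    rcases hadj with h1 | ⟨h1, _⟩
    · exact absurd h1 hnxy
    · simp only [Set.mem_singleton_iff, Sym2.eq_iff] at h1
      rcases h1 with ⟨rfl, rfl⟩ | ⟨rfl, rfl⟩
      · exact ⟨hx, hy⟩
      · exact ⟨hy, hx⟩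
  have hsub : (t.erase a).erase w ⊆ G.neighborFinset a := by
    intro c hc
    have hcw : c ≠ w := Finset.ne_of_mem_erase hc
    have hca : c ≠ a := Finset.ne_of_mem_erase (Finset.mem_of_mem_erase hc)
    have hct : c ∈ t := Finset.mem_of_mem_erase (Finset.mem_of_mem_erase hc)
    have hadj2 : (G ⊔ SimpleGraph.fromEdgeSet {s(a, w)}).Adj a c :=
      hclq (by exact_mod_cast hmem.1) (by exact_mod_cast hct) (fun h => hca h.symm)
    rw [SimpleGraph.sup_adj, SimpleGraph.fromEdgeSet_adj] at hadj2
    rcases hadj2 with h1 | ⟨h1, _⟩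
    · rw [SimpleGraph.mem_neighborFinset]; exact h1
    · simp only [Set.mem_singleton_iff, Sym2.eq_iff] at h1
      rcases h1 with ⟨_, rfl⟩ | ⟨rfl, rfl⟩
      · exact absurd rfl hcw
      · exact absurd rfl hca
  have h1 : ((t.erase a).erase w).card ≤ G.degree a := by
    rw [SimpleGraph.degree]; exact Finset.card_le_card hsub
  have hwa : w ∈ t.erase a := Finset.mem_erase.2 ⟨fun h => haw h.symm, hmem.2⟩
  rw [Finset.card_erase_of_mem hwa, Finset.card_erase_of_mem hmem.1, hcard] at h1
  omega

lemma deg_ge_k {V : Type*} [Fintype V] [DecidableEq V] {s k : ℕ} {G : SimpleGraph V}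
    [DecidableRel G.Adj] (hG : IsKSat G s) (hs : k + 2 ≤ s)
    (hcard : k + 1 ≤ Fintype.card V) (a : V) : k ≤ G.degree a := by
  by_cases h : ∃ w, a ≠ w ∧ ¬ G.Adj a w
  · obtain ⟨w, h1, h2⟩ := h
    have := deg_lb hG h1 h2
    omega
  · push_neg at h
    have hsub : Finset.univ.erase a ⊆ G.neighborFinset a := by
      intro w hw
      rw [SimpleGraph.mem_neighborFinset]
      exact h w (Ne.symm (Finset.ne_of_mem_erase hw))
    have := Finset.card_le_card hsub
    rw [Finset.card_erase_of_mem (Finset.mem_univ a), Finset.card_univ] at this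
    rw [SimpleGraph.degree]
    omega
lemma greedy {V : Type*} [Fintype V] [DecidableEq V] {k : ℕ} {G : SimpleGraph V}
    [DecidableRel G.Adj] {I : Finset V}
    (hind : ∀ a ∈ I, ∀ b ∈ I, ¬ G.Adj a b)
    (hdeg : ∀ a ∈ I, k ≤ G.degree a) :
    ∀ J : Finset V, J ⊆ I → ∀ F : Finset V, F.card + J.card ≤ k →
    ∃ M : Finset (Sym2 V), M.card = J.card ∧ (∀ e ∈ M, e ∈ G.edgeSet) ∧
      (∀ e ∈ M, ∀ f ∈ M, e ≠ f → ∀ x, x ∈ e → x ∉ f) ∧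
      (∀ a ∈ J, ∃ e ∈ M, a ∈ e) ∧
      (∀ e ∈ M, ∀ x, x ∈ e → x ∈ J ∨ (x ∉ I ∧ x ∉ F)) := by
  intro J
  induction J using Finset.induction_on with
  | empty =>
    intro _ F _
    exact ⟨∅, by simp, by simp, by simp, by simp, by simp⟩
  | @insert a J ha ih =>
    intro hJI F hF
    have haI : a ∈ I := hJI (Finset.mem_insert_self a J)
    have hJI' : J ⊆ I := fun x hx => hJI (Finset.mem_insert_of_mem hx)
    rw [Finset.card_insert_of_notMem ha] at hF
    -- choose a neighbor b of a outside F
    have hbex : (G.neighborFinset a \ F).Nonempty := by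
      rw [← Finset.card_pos]
      have h1 : k ≤ (G.neighborFinset a).card := hdeg a haI
      have h3 : (G.neighborFinset a).card - F.card ≤ (G.neighborFinset a \ F).card :=
        Finset.le_card_sdiff F (G.neighborFinset a)
      omega
    obtain ⟨b, hb⟩ := hbex
    rw [Finset.mem_sdiff, SimpleGraph.mem_neighborFinset] at hb
    obtain ⟨hab, hbF⟩ := hb
    have hbI : b ∉ I := fun hbI => hind a haI b hbI hab
    obtain ⟨M, hMcard, hMedge, hMdisj, hMcov, hMsupp⟩ :=
      ih hJI' (insert b F) (by
        have := Finset.card_insert_le b F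
        omega)
    refine ⟨insert (s(a, b)) M, ?_, ?_, ?_, ?_, ?_⟩
    · have hnew : s(a, b) ∉ M := by
        intro hmem
        rcases hMsupp _ hmem a (by simp) with h | ⟨h, _⟩
        · exact ha h
        · exact h haI
      rw [Finset.card_insert_of_notMem hnew, hMcard,
        Finset.card_insert_of_notMem ha]
    · intro e he
      rcases Finset.mem_insert.1 he with rfl | he
      · exact hab
      · exact hMedge e he
    · -- disjointness
      have hkey : ∀ f ∈ M, a ∉ f ∧ b ∉ f := by
        intro f hf
        constructor
        · intro haf
          rcases hMsupp f hf a haf with h | ⟨h, _⟩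
          · exact ha h
          · exact h haI
        · intro hbf
          rcases hMsupp f hf b hbf with h | ⟨_, h⟩
          · exact hbI (hJI' h)
          · exact h (Finset.mem_insert_self b F)
      intro e he f hf hef x hxe hxf
      rcases Finset.mem_insert.1 he with he' | he'
      · rcases Finset.mem_insert.1 hf with hf' | hf'
        · exact hef (he'.trans hf'.symm)
        · subst he'
          rcases Sym2.mem_iff.1 hxe with rfl | rfl
          · exact (hkey f hf').1 hxf
          · exact (hkey f hf').2 hxf
      · rcases Finset.mem_insert.1 hf with hf' | hf'
        · subst hf'
          rcases Sym2.mem_iff.1 hxf with rfl | rfl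
          · exact (hkey e he').1 hxe
          · exact (hkey e he').2 hxe
        · exact hMdisj e he' f hf' hef x hxe hxf
    · intro c hc
      rcases Finset.mem_insert.1 hc with rfl | hc
      · exact ⟨s(c, b), Finset.mem_insert_self _ _, by simp⟩
      · obtain ⟨e, he, hce⟩ := hMcov c hc
        exact ⟨e, Finset.mem_insert_of_mem he, hce⟩
    · intro e he x hxe
      rcases Finset.mem_insert.1 he with rfl | he
      · rcases Sym2.mem_iff.1 hxe with rfl | rfl
        · exact Or.inl (Finset.mem_insert_self x J)
        · exact Or.inr ⟨hbI, hbF⟩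
      · rcases hMsupp e he x hxe with h | ⟨h1, h2⟩
        · exact Or.inl (Finset.mem_insert_of_mem h)
        · exact Or.inr ⟨h1, fun hxF => h2 (Finset.mem_insert_of_mem hxF)⟩
open Finset SimpleGraph in
lemma sym2_filter_card_le {V : Type*} [Fintype V] [DecidableEq V] (e : Sym2 V) :
    (Finset.univ.filter (· ∈ e)).card ≤ 2 := by
  induction e using Sym2.ind with
  | _ x y =>
    have hsub : Finset.univ.filter (· ∈ s(x, y)) ⊆ {x, y} := by
      intro z hz
      simp only [Finset.mem_filter, Sym2.mem_iff] at hz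
      rcases hz.2 with rfl | rfl <;> simp
    calc (Finset.univ.filter (· ∈ s(x, y))).card ≤ ({x, y} : Finset V).card :=
          Finset.card_le_card hsub
      _ ≤ 2 := Finset.card_insert_le x {y} |>.trans (by simp)

/-- If `G` is `K_s`-saturated, `v` has degree at least `2ks`, and `I` is an independent
set of size `k - 1` avoiding `v`, then the number of matchings of size `k` in `G` whose
vertex set contains `I ∪ {v}` is at least `d_G(v) / 2`. -/
theorem stmt_12 {V : Type*} [Fintype V] [DecidableEq V] (s k : ℕ) (hk : 2 ≤ k)
    (hks : k ≤ s - 2) (G : SimpleGraph V) [DecidableRel G.Adj] (hG : IsKSat G s)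
    (v : V) (hd : 2 * k * s ≤ G.degree v)
    (I : Finset V) (hI : I.card = k - 1) (hvI : v ∉ I)
    (hind : ∀ a ∈ I, ∀ b ∈ I, ¬ G.Adj a b) :
    G.degree v ≤
      2 * Set.ncard {M : Finset (Sym2 V) | M.card = k ∧ (∀ e ∈ M, e ∈ G.edgeSet) ∧
        (∀ e ∈ M, ∀ f ∈ M, e ≠ f → ∀ w, w ∈ e → w ∉ f) ∧
        ∀ u ∈ insert v I, ∃ e ∈ M, u ∈ e} := by
  classical
  set S := {M : Finset (Sym2 V) | M.card = k ∧ (∀ e ∈ M, e ∈ G.edgeSet) ∧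
        (∀ e ∈ M, ∀ f ∈ M, e ≠ f → ∀ w, w ∈ e → w ∉ f) ∧
        ∀ u ∈ insert v I, ∃ e ∈ M, u ∈ e} with hS
  have hs : k + 2 ≤ s := by omega
  have hcardV : k + 1 ≤ Fintype.card V := by
    have h1 := G.degree_lt_card_verts v
    have h2 : k ≤ 2 * k * s := by nlinarith
    omega
  have hdeg : ∀ a ∈ I, k ≤ G.degree a := fun a _ => deg_ge_k hG hs hcardV a
  obtain ⟨M₀, hM₀card, hM₀edge, hM₀disj, hM₀cov, hM₀supp⟩ :=
    greedy hind hdeg I (Finset.Subset.refl I) {v}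
      (by rw [Finset.card_singleton, hI]; omega)
  rw [hI] at hM₀card
  have hvsupp : ∀ e ∈ M₀, v ∉ e := by
    intro e he hv
    rcases hM₀supp e he v hv with h | ⟨_, h⟩
    · exact hvI h
    · exact h (Finset.mem_singleton_self v)
  have hsnew : ∀ u : V, s(u, v) ∉ M₀ := by
    intro u hu
    exact hvsupp _ hu (by simp)
  set p : V → Prop := fun u => ∃ e ∈ M₀, u ∈ e with hp
  set U := (G.neighborFinset v).filter (fun u => ¬ p u) with hU
  have hsplit :
      ((G.neighborFinset v).filter p).card + U.card = G.degree v := by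
    rw [hU, SimpleGraph.degree]
    exact Finset.card_filter_add_card_filter_not (p := p)
  have hW : ((G.neighborFinset v).filter p).card ≤ 2 * (k - 1) := by
    have hsub : (G.neighborFinset v).filter p ⊆
        M₀.biUnion (fun e => Finset.univ.filter (· ∈ e)) := by
      intro u hu
      obtain ⟨e, he, hue⟩ := (Finset.mem_filter.1 hu).2
      exact Finset.mem_biUnion.2 ⟨e, he, by simp [hue]⟩
    calc ((G.neighborFinset v).filter p).card
        ≤ (M₀.biUnion (fun e => Finset.univ.filter (· ∈ e))).card :=
          Finset.card_le_card hsub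
      _ ≤ ∑ e ∈ M₀, (Finset.univ.filter (· ∈ e)).card := Finset.card_biUnion_le
      _ ≤ ∑ _e ∈ M₀, 2 := Finset.sum_le_sum (fun e _ => sym2_filter_card_le e)
      _ = 2 * (k - 1) := by rw [Finset.sum_const, hM₀card, smul_eq_mul, mul_comm]
  -- the injection
  set f : V → Finset (Sym2 V) := fun u => insert s(u, v) M₀ with hf
  have hUmem : ∀ u ∈ U, G.Adj v u ∧ ∀ e ∈ M₀, u ∉ e := by
    intro u hu
    rw [hU, Finset.mem_filter, SimpleGraph.mem_neighborFinset] at hu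
    refine ⟨hu.1, fun e he hue => hu.2 ⟨e, he, hue⟩⟩
  have hinj : Set.InjOn f ↑U := by
    intro u hu u' hu' heq
    have h1 : s(u, v) ∈ f u' := heq ▸ Finset.mem_insert_self _ _
    rcases Finset.mem_insert.1 h1 with h | h
    · rcases Sym2.eq_iff.1 h with ⟨h2, _⟩ | ⟨h2, h3⟩
      · exact h2
      · exact absurd h2.symm ((hUmem u hu).1.ne)
    · exact absurd h (hsnew u)
  have hsub : ↑(U.image f) ⊆ S := by
    intro M hM
    rw [Finset.coe_image] at hM
    obtain ⟨u, hu, rfl⟩ := hM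
    obtain ⟨hadj, hufree⟩ := hUmem u hu
    have hkey : ∀ e ∈ M₀, u ∉ e ∧ v ∉ e := fun e he => ⟨hufree e he, hvsupp e he⟩
    refine ⟨?_, ?_, ?_, ?_⟩
    · rw [hf]
      simp only
      rw [Finset.card_insert_of_notMem (hsnew u), hM₀card]
      omega
    · intro e he
      rcases Finset.mem_insert.1 he with rfl | he
      · exact hadj.symm
      · exact hM₀edge e he
    · intro e he e' he' hee' x hxe hxe'
      rcases Finset.mem_insert.1 he with he0 | he0
      · rcases Finset.mem_insert.1 he' with he0' | he0'
        · exact hee' (he0.trans he0'.symm)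
        · subst he0
          rcases Sym2.mem_iff.1 hxe with rfl | rfl
          · exact (hkey e' he0').1 hxe'
          · exact (hkey e' he0').2 hxe'
      · rcases Finset.mem_insert.1 he' with he0' | he0'
        · subst he0'
          rcases Sym2.mem_iff.1 hxe' with rfl | rfl
          · exact (hkey e he0).1 hxe
          · exact (hkey e he0).2 hxe
        · exact hM₀disj e he0 e' he0' hee' x hxe hxe'
    · intro x hx
      rcases Finset.mem_insert.1 hx with rfl | hx
      · exact ⟨s(u, x), Finset.mem_insert_self _ _, by simp⟩
      · obtain ⟨e, he, hxe⟩ := hM₀cov x hx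
        exact ⟨e, Finset.mem_insert_of_mem he, hxe⟩
  have hcount : U.card ≤ S.ncard := by
    have h1 : (U.image f).card ≤ S.ncard := by
      rw [← Set.ncard_coe_finset]
      exact Set.ncard_le_ncard hsub (Set.toFinite S)
    rwa [Finset.card_image_of_injOn hinj] at h1
  have h4k : 4 * k ≤ 2 * k * s := by nlinarith
  omega
end
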